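/- arXiv:2007.15566 — 3 statements merged into one kernel-verified Lean document; each statement's English description precedes it below -/
import Mathlib

section
/- Let μ be a tail invariant measure on the path-space of a generalized Bratteli diagram with incidence matrices (Fₙ), and let μ⁽ⁿ⁾_v be the common measure of any cylinder set of paths from V₀ ending at v ∈ Vₙ. Then Aₙ μ⁽ⁿ⁺¹⁾ = μ⁽ⁿ⁾ for all n, where Aₙ = Fₙᵀ. Conversely, any sequence of nonnegative vectors (μ⁽ⁿ⁾) with Aₙ μ⁽ⁿ⁺¹⁾ = μ⁽ⁿ⁾ determines a unique tail invariant measure on the path-space. -/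
open scoped ENNReal
open MeasureTheory

/-- The path-space of a generalized Bratteli diagram with levels `V n`, edge sets `E n`,
source maps `src n : E n → V n` and range maps `rng n : E n → V (n+1)`. -/
abbrev PathSp {V E : ℕ → Type*} (src : ∀ n, E n → V n) (rng : ∀ n, E n → V (n + 1)) :
    Type _ :=
  {x : ∀ n, E n // ∀ n, rng n (x n) = src (n + 1) (x (n + 1))}

/-- The cylinder set of all infinite paths agreeing with `x` on edges `0, 1, …, n`. -/
def cylSet {V E : ℕ → Type*} (src : ∀ n, E n → V n) (rng : ∀ n, E n → V (n + 1))
    (x : PathSp src rng) (n : ℕ) : Set (PathSp src rng) :=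
  {y | ∀ i ≤ n, y.1 i = x.1 i}

/-- A measure on the path-space is tail invariant if cylinder sets of the same length
with the same terminal vertex have the same measure. -/
def TailInv {V E : ℕ → Type*} [∀ n, MeasurableSpace (E n)]
    (src : ∀ n, E n → V n) (rng : ∀ n, E n → V (n + 1))
    (μ : Measure (PathSp src rng)) : Prop :=
  ∀ (n : ℕ) (x y : PathSp src rng), rng n (x.1 n) = rng n (y.1 n) →
    μ (cylSet src rng x n) = μ (cylSet src rng y n)

/-- The incidence matrix entry `f⁽ⁿ⁾_{v,w}`: the number of edges from `w ∈ V n`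
to `v ∈ V (n+1)`. -/
noncomputable def Fmat {V E : ℕ → Type*} (src : ∀ n, E n → V n)
    (rng : ∀ n, E n → V (n + 1)) (n : ℕ) (v : V (n + 1)) (w : V n) : ℝ≥0∞ :=
  (Nat.card {e : E n // src n e = w ∧ rng n e = v} : ℝ≥0∞)

namespace Brat

variable {V E : ℕ → Type*} (src : ∀ n, E n → V n) (rng : ∀ n, E n → V (n + 1))

section ext

variable (hs : ∀ (n : ℕ) (v : V n), ∃ e : E n, src n e = v)
include hs

/-- Extend a function which is a chain up to level `N` to a chain everywhere,
keeping the values at indices `≤ N`. -/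
noncomputable def extFun (N : ℕ) (f : ∀ i, E i) : ∀ i, E i
  | 0 => f 0
  | i + 1 => if i + 1 ≤ N then f (i + 1) else
      (hs (i + 1) (rng i (extFun N f i))).choose

lemma extFun_agree (N : ℕ) (f : ∀ i, E i) : ∀ i ≤ N, extFun src rng hs N f i = f i := by
  intro i hi
  cases i with
  | zero => rfl
  | succ j => simp only [extFun, if_pos hi]

lemma extFun_chain (N : ℕ) (f : ∀ i, E i)
    (hf : ∀ i, i < N → rng i (f i) = src (i + 1) (f (i + 1))) :
    ∀ i, rng i (extFun src rng hs N f i) = src (i + 1) (extFun src rng hs N f (i + 1)) := by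
  intro i
  by_cases h : i + 1 ≤ N
  · rw [extFun_agree src rng hs N f (i+1) h, extFun_agree src rng hs N f i (le_of_lt h)]
    exact hf i h
  · show _ = src (i+1) (extFun src rng hs N f (i+1))
    simp only [extFun, if_neg h]
    exact ((hs (i + 1) (rng i (extFun src rng hs N f i))).choose_spec).symm

/-- Extend a finite chain to an infinite path. -/
lemma exists_path_ext (N : ℕ) (f : ∀ i, E i)
    (hf : ∀ i, i < N → rng i (f i) = src (i + 1) (f (i + 1))) :
    ∃ x : PathSp src rng, ∀ i ≤ N, x.1 i = f i :=
  ⟨⟨extFun src rng hs N f, extFun_chain src rng hs N f hf⟩, extFun_agree src rng hs N f⟩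

variable (hr : ∀ (n : ℕ) (v : V (n + 1)), ∃ e : E n, rng n e = v)
include hr

noncomputable def rayFun (e : E 0) : ∀ i, E i
  | 0 => e
  | i + 1 => (hs (i + 1) (rng i (rayFun e i))).choose

/-- There is a chain through any edge. -/
lemma exists_chain_through (n : ℕ) (e : E n) :
    ∃ f : ∀ i, E i, f n = e ∧ ∀ i, i < n → rng i (f i) = src (i + 1) (f (i + 1)) := by
  induction n with
  | zero => exact ⟨rayFun src rng hs e, rfl, fun i hi => absurd hi (Nat.not_lt_zero i)⟩
  | succ n ih =>
    obtain ⟨e', he'⟩ := hr n (src (n + 1) e)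
    obtain ⟨f, hfn, hfc⟩ := ih e'
    refine ⟨Function.update f (n + 1) e, Function.update_self _ _ _, ?_⟩
    intro i hi
    rcases Nat.lt_succ_iff_lt_or_eq.mp hi with hi' | hi'
    · rw [Function.update_of_ne (by omega) , Function.update_of_ne (by omega)]
      exact hfc i hi'
    · subst hi'
      rw [Function.update_of_ne (by omega), Function.update_self, hfn, he']

lemma exists_path_through (n : ℕ) (e : E n) :
    ∃ x : PathSp src rng, x.1 n = e := by
  obtain ⟨f, hfn, hfc⟩ := exists_chain_through src rng hs hr n e
  obtain ⟨x, hx⟩ := exists_path_ext src rng hs n f hfc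
  exact ⟨x, (hx n le_rfl).trans hfn⟩

/-- Extend a path by one edge. -/
lemma exists_path_extension (x : PathSp src rng) (n : ℕ) (e : E (n + 1))
    (he : src (n + 1) e = rng n (x.1 n)) :
    ∃ x' : PathSp src rng, (∀ i ≤ n, x'.1 i = x.1 i) ∧ x'.1 (n + 1) = e := by
  have hch : ∀ i, i < n + 1 → rng i (Function.update x.1 (n + 1) e i) =
      src (i + 1) (Function.update x.1 (n + 1) e (i + 1)) := by
    intro i hi
    rcases Nat.lt_succ_iff_lt_or_eq.mp hi with hi' | hi'
    · rw [Function.update_of_ne (by omega), Function.update_of_ne (by omega)]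
      exact x.2 i
    · subst hi'
      rw [Function.update_of_ne (by omega), Function.update_self, he]
  obtain ⟨x', hx'⟩ := exists_path_ext src rng hs (n + 1) (Function.update x.1 (n + 1) e) hch
  refine ⟨x', fun i hi => ?_, ?_⟩
  · rw [hx' i (by omega), Function.update_of_ne (by omega)]
  · rw [hx' (n + 1) le_rfl, Function.update_self]

end ext

section meas

variable [∀ n, Countable (E n)] [∀ n, MeasurableSpace (E n)]
  [∀ n, DiscreteMeasurableSpace (E n)]

lemma cyl_measurable (x : PathSp src rng) (n : ℕ) :
    MeasurableSet (cylSet src rng x n) := by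
  have : cylSet src rng x n = ⋂ (i : ℕ) (_ : i ≤ n), (fun y : PathSp src rng => y.1 i) ⁻¹' {x.1 i} := by
    ext y; simp [cylSet]
  rw [this]
  exact MeasurableSet.iInter fun i => MeasurableSet.iInter fun _ =>
    ((measurable_pi_apply i).comp measurable_subtype_coe) MeasurableSet.of_discrete

end meas

/-- Regrouping a sum over edges with a given source by their range. -/
lemma regroup (hfin : ∀ (n : ℕ) (v : V (n + 1)), Finite {e : E n // rng n e = v})
    (n : ℕ) (w : V n) (g : V (n + 1) → ℝ≥0∞) :
    ∑' e : {e : E n // src n e = w}, g (rng n e.1)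
      = ∑' v : V (n + 1), Fmat src rng n v w * g v := by
  classical
  have hfin' : ∀ v : V (n+1), Finite {e : E n // src n e = w ∧ rng n e = v} := by
    intro v
    have : Function.Injective (fun e : {e : E n // src n e = w ∧ rng n e = v} =>
        (⟨e.1, e.2.2⟩ : {e : E n // rng n e = v})) := by
      rintro ⟨a, ha⟩ ⟨b, hb⟩ h
      simpa using congrArg Subtype.val h
    exact Finite.of_injective _ this
  -- symmetric equivalence
  let eqv : (Σ v : V (n+1), {e : E n // src n e = w ∧ rng n e = v}) ≃ {e : E n // src n e = w} :=
    { toFun := fun p => ⟨p.2.1, p.2.2.1⟩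
      invFun := fun e => ⟨rng n e.1, ⟨e.1, e.2, rfl⟩⟩
      left_inv := by rintro ⟨v, e, he, rfl⟩; rfl
      right_inv := by rintro ⟨e, he⟩; rfl }
  calc ∑' e : {e : E n // src n e = w}, g (rng n e.1)
      = ∑' p : (Σ v : V (n+1), {e : E n // src n e = w ∧ rng n e = v}), g (rng n p.2.1) :=
        ((Equiv.tsum_eq eqv (fun e => g (rng n e.1))).symm).trans (tsum_congr fun c => rfl)
    _ = ∑' (v : V (n+1)) (e : {e : E n // src n e = w ∧ rng n e = v}), g (rng n e.1) :=
        ENNReal.tsum_sigma (fun v (e : {e : E n // src n e = w ∧ rng n e = v}) => g (rng n e.1))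
    _ = ∑' v : V (n + 1), Fmat src rng n v w * g v := tsum_congr fun v => ?_
  have : ∀ e : {e : E n // src n e = w ∧ rng n e = v}, g (rng n e.1) = g v := by
    rintro ⟨e, he, rfl⟩; rfl
  rw [tsum_congr this]
  haveI := hfin' v
  haveI : Fintype {e : E n // src n e = w ∧ rng n e = v} := Fintype.ofFinite _
  rw [tsum_fintype]
  simp [Fmat, Finset.sum_const, Nat.card_eq_fintype_card, nsmul_eq_mul]

section forward

variable [∀ n, Countable (E n)] [∀ n, MeasurableSpace (E n)]
  [∀ n, DiscreteMeasurableSpace (E n)]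
  (hfin : ∀ (n : ℕ) (v : V (n + 1)), Finite {e : E n // rng n e = v})
  (hr : ∀ (n : ℕ) (v : V (n + 1)), ∃ e : E n, rng n e = v)
  (hs : ∀ (n : ℕ) (v : V n), ∃ e : E n, src n e = v)

include hfin hr hs

lemma forward_dir (μ : Measure (PathSp src rng)) (μv : ∀ n, V n → ℝ≥0∞)
    (hcyl : ∀ (n : ℕ) (x : PathSp src rng),
      μ (cylSet src rng x n) = μv (n + 1) (rng n (x.1 n)))
    (h0 : ∀ v : V 0, μv 0 v = μ {y : PathSp src rng | src 0 (y.1 0) = v})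
    (n : ℕ) (w : V n) :
    μv n w = ∑' v : V (n + 1), Fmat src rng n v w * μv (n + 1) v := by
  classical
  cases n with
  | zero =>
    rw [h0 w, ← regroup src rng hfin 0 w (μv 1)]
    -- choose a path through each edge with source w
    have hx : ∀ e : {e : E 0 // src 0 e = w}, ∃ x : PathSp src rng, x.1 0 = e.1 :=
      fun e => exists_path_through src rng hs hr 0 e.1
    choose xe hxe using hx
    have hset : {y : PathSp src rng | src 0 (y.1 0) = w}
        = ⋃ e : {e : E 0 // src 0 e = w}, cylSet src rng (xe e) 0 := by
      ext y
      constructor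
      · intro hy
        refine Set.mem_iUnion.2 ⟨⟨y.1 0, hy⟩, fun i hi => ?_⟩
        interval_cases i
        rw [hxe ⟨y.1 0, hy⟩]
      · intro hy
        obtain ⟨e, he⟩ := Set.mem_iUnion.1 hy
        have : y.1 0 = e.1 := (he 0 le_rfl).trans (hxe e)
        show src 0 (y.1 0) = w
        rw [this, e.2]
    rw [hset, measure_iUnion ?_ (fun e => cyl_measurable src rng (xe e) 0)]
    · exact tsum_congr fun e => by rw [hcyl 0 (xe e), hxe e]
    · intro e e' hee
      refine Set.disjoint_left.2 fun y hy hy' => hee ?_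
      have h1 : y.1 0 = (xe e).1 0 := hy 0 le_rfl
      have h2 : y.1 0 = (xe e').1 0 := hy' 0 le_rfl
      exact Subtype.ext ((hxe e).symm.trans ((h1.symm.trans h2).trans (hxe e')))
  | succ m =>
    obtain ⟨e₀, he₀⟩ := hr m w
    obtain ⟨x, hxm⟩ := exists_path_through src rng hs hr m e₀
    have hw : rng m (x.1 m) = w := by rw [hxm, he₀]
    have hx : ∀ e : {e : E (m+1) // src (m+1) e = w},
        ∃ x' : PathSp src rng, (∀ i ≤ m, x'.1 i = x.1 i) ∧ x'.1 (m + 1) = e.1 :=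
      fun e => exists_path_extension src rng hs hr x m e.1 (e.2.trans hw.symm)
    choose xe hxe1 hxe2 using hx
    have hval : μv (m + 1) w = μ (cylSet src rng x m) := by rw [hcyl m x, hw]
    have hset : cylSet src rng x m
        = ⋃ e : {e : E (m+1) // src (m+1) e = w}, cylSet src rng (xe e) (m + 1) := by
      ext y
      constructor
      · intro hy
        have hsrc : src (m+1) (y.1 (m+1)) = w := by rw [← y.2 m, hy m le_rfl, hw]
        refine Set.mem_iUnion.2 ⟨⟨y.1 (m+1), hsrc⟩, fun i hi => ?_⟩
        rcases Nat.lt_succ_iff_lt_or_eq.mp (Nat.lt_succ_of_le hi) with hi' | hi'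
        · rw [hxe1 _ i (by omega), hy i (by omega)]
        · subst hi'
          rw [hxe2 ⟨y.1 (m+1), hsrc⟩]
      · intro hy
        obtain ⟨e, he⟩ := Set.mem_iUnion.1 hy
        intro i hi
        rw [he i (by omega), hxe1 e i hi]
    rw [hval, hset, measure_iUnion ?_ (fun e => cyl_measurable src rng (xe e) (m+1))]
    · rw [← regroup src rng hfin (m+1) w (μv (m+2))]
      exact tsum_congr fun e => by rw [hcyl (m+1) (xe e), hxe2 e]
    · intro e e' hee
      refine Set.disjoint_left.2 fun y hy hy' => hee ?_
      have h1 : y.1 (m+1) = (xe e).1 (m+1) := hy (m+1) le_rfl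
      have h2 : y.1 (m+1) = (xe e').1 (m+1) := hy' (m+1) le_rfl
      exact Subtype.ext ((hxe2 e).symm.trans ((h1.symm.trans h2).trans (hxe2 e')))

end forward

section exist

variable [∀ n, Countable (E n)] [∀ n, MeasurableSpace (E n)]
  [∀ n, DiscreteMeasurableSpace (E n)]

variable (junk : ∀ i, E i)

/-- Finite chains of length `N` (with junk values beyond `N`). -/
def FCh (N : ℕ) : Type _ :=
  {c : ∀ i, E i // (∀ i, i < N → rng i (c i) = src (i + 1) (c (i + 1))) ∧
    ∀ i, N < i → c i = junk i}

instance FCh.countable (N : ℕ) : Countable (FCh src rng junk N) := by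
  have hinj : Function.Injective
      (fun c : FCh src rng junk N => (fun i : Fin (N+1) => c.1 i.1)) := by
    intro c c' h
    apply Subtype.ext
    funext i
    rcases le_or_gt i N with hi | hi
    · exact congrFun h ⟨i, by omega⟩
    · rw [c.2.2 i hi, c'.2.2 i hi]
  exact hinj.countable

lemma FCh.ext {N : ℕ} {c c' : FCh src rng junk N} (h : ∀ i ≤ N, c.1 i = c'.1 i) :
    c = c' := by
  apply Subtype.ext
  funext i
  rcases le_or_gt i N with hi | hi
  · exact h i hi
  · rw [c.2.2 i hi, c'.2.2 i hi]

variable (hs : ∀ (n : ℕ) (v : V n), ∃ e : E n, src n e = v)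
include junk hs in
/-- The canonical path extending a finite chain. -/
noncomputable def pathOf {N : ℕ} (c : FCh src rng junk N) : PathSp src rng :=
  ⟨extFun src rng hs N c.1, extFun_chain src rng hs N c.1 c.2.1⟩

lemma pathOf_coord {N : ℕ} (c : FCh src rng junk N) {i : ℕ} (hi : i ≤ N) :
    (pathOf src rng junk hs c).1 i = c.1 i :=
  extFun_agree src rng hs N c.1 i hi

/-- Truncating a path to a finite chain. -/
def cFrom (z : PathSp src rng) (N : ℕ) : FCh src rng junk N := by
  refine ⟨fun i => if i ≤ N then z.1 i else junk i, fun i hi => ?_, fun i hi => if_neg (by omega)⟩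
  dsimp only
  rw [if_pos (by omega : i ≤ N), if_pos (by omega : i + 1 ≤ N)]
  exact z.2 i

lemma cFrom_coord (z : PathSp src rng) {N i : ℕ} (hi : i ≤ N) :
    (cFrom src rng junk z N).1 i = z.1 i := if_pos hi

/-- Canonical representative of a path at level `N`. -/
noncomputable def rp (N : ℕ) (z : PathSp src rng) : PathSp src rng :=
  pathOf src rng junk hs (cFrom src rng junk z N)

lemma rp_coord (N : ℕ) (z : PathSp src rng) {i : ℕ} (hi : i ≤ N) :
    (rp src rng junk hs N z).1 i = z.1 i := by
  rw [rp, pathOf_coord src rng junk hs _ hi, cFrom_coord src rng junk z hi]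

lemma rp_eq_of_agree {N : ℕ} {z z' : PathSp src rng} (h : ∀ i ≤ N, z.1 i = z'.1 i) :
    rp src rng junk hs N z = rp src rng junk hs N z' := by
  unfold rp
  congr 1
  apply Subtype.ext
  funext i
  show (if i ≤ N then z.1 i else junk i) = (if i ≤ N then z'.1 i else junk i)
  rcases le_or_gt i N with hi | hi
  · rw [if_pos hi, if_pos hi, h i hi]
  · rw [if_neg (by omega), if_neg (by omega)]

lemma rp_idem {N : ℕ} (z : PathSp src rng) :
    rp src rng junk hs N (rp src rng junk hs N z) = rp src rng junk hs N z :=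
  rp_eq_of_agree src rng junk hs fun i hi => rp_coord src rng junk hs N z hi

variable (μv : ∀ n, V n → ℝ≥0∞)

/-- The weight of a finite chain. -/
noncomputable def wt {N : ℕ} (c : FCh src rng junk N) : ℝ≥0∞ :=
  μv (N + 1) (rng N (c.1 N))

/-- Approximating measure at level `N`: weighted diracs at canonical paths. -/
noncomputable def μap (N : ℕ) : Measure (PathSp src rng) :=
  Measure.sum (fun c : FCh src rng junk N =>
    wt src rng junk μv c • Measure.dirac (pathOf src rng junk hs c))

lemma μap_apply (N : ℕ) {s : Set (PathSp src rng)} (hes : MeasurableSet s) :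
    μap src rng junk hs μv N s
      = ∑' c : FCh src rng junk N,
          wt src rng junk μv c * s.indicator 1 (pathOf src rng junk hs c) := by
  rw [μap, Measure.sum_apply _ hes]
  refine tsum_congr fun c => ?_
  rw [Measure.smul_apply, Measure.dirac_apply' _ hes, smul_eq_mul]

/-- Determined at level `N`. -/
def Dtm (N : ℕ) (s : Set (PathSp src rng)) : Prop :=
  ∀ y y' : PathSp src rng, (∀ i ≤ N, y.1 i = y'.1 i) → y ∈ s → y' ∈ s

lemma dtm_mono {M N : ℕ} (h : M ≤ N) {s : Set (PathSp src rng)}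
    (hd : Dtm src rng M s) : Dtm src rng N s :=
  fun y y' hyy => hd y y' (fun i hi => hyy i (le_trans hi h))

lemma dtm_cyl {k N : ℕ} (h : k ≤ N) (z : PathSp src rng) :
    Dtm src rng N (cylSet src rng z k) := by
  intro y y' hyy hy i hi
  rw [← hyy i (le_trans hi h)]
  exact hy i hi

lemma partition {N : ℕ} {s : Set (PathSp src rng)} (hd : Dtm src rng N s) :
    s = ⋃ z ∈ (rp src rng junk hs N '' s), cylSet src rng z N := by
  ext y
  constructor
  · intro hy
    refine Set.mem_biUnion (Set.mem_image_of_mem _ hy) ?_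
    intro i hi
    exact (rp_coord src rng junk hs N y hi).symm
  · intro hy
    obtain ⟨z, ⟨u, hu, rfl⟩, hyz⟩ := Set.mem_iUnion₂.1 hy
    refine hd u y (fun i hi => ?_) hu
    rw [hyz i hi, rp_coord src rng junk hs N u hi]

lemma image_rp_countable {N : ℕ} (s : Set (PathSp src rng)) :
    (rp src rng junk hs N '' s).Countable := by
  refine Set.Countable.mono ?_ (Set.countable_range (pathOf src rng junk hs (N := N)))
  rintro z ⟨u, _, rfl⟩
  exact ⟨cFrom src rng junk u N, rfl⟩

lemma image_rp_disjoint {N : ℕ} (s : Set (PathSp src rng)) :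
    (rp src rng junk hs N '' s).PairwiseDisjoint (fun z => cylSet src rng z N) := by
  rintro z₁ hz₁ z₂ hz₂ hne
  refine Set.disjoint_left.2 fun y hy₁ hy₂ => hne ?_
  obtain ⟨u₁, _, rfl⟩ := hz₁
  obtain ⟨u₂, _, rfl⟩ := hz₂
  have h₁ : rp src rng junk hs N y = rp src rng junk hs N (rp src rng junk hs N u₁) :=
    rp_eq_of_agree src rng junk hs fun i hi => hy₁ i hi
  have h₂ : rp src rng junk hs N y = rp src rng junk hs N (rp src rng junk hs N u₂) :=
    rp_eq_of_agree src rng junk hs fun i hi => hy₂ i hi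
  rw [rp_idem src rng junk hs] at h₁ h₂
  rw [← h₁, ← h₂]

lemma meas_decomp {N : ℕ} {s : Set (PathSp src rng)} (hd : Dtm src rng N s)
    (μ' : Measure (PathSp src rng)) :
    μ' s = ∑' z : ↥(rp src rng junk hs N '' s), μ' (cylSet src rng z.1 N) := by
  conv_lhs => rw [partition src rng junk hs hd]
  exact measure_biUnion (image_rp_countable src rng junk hs s)
    (image_rp_disjoint src rng junk hs s) (fun z _ => cyl_measurable src rng z N)

include junk hs in
lemma dtm_measurable {N : ℕ} {s : Set (PathSp src rng)} (hd : Dtm src rng N s) :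
    MeasurableSet s := by
  rw [partition src rng junk hs hd]
  exact MeasurableSet.biUnion (image_rp_countable src rng junk hs s)
    (fun z _ => cyl_measurable src rng z N)

section eval

variable (hfin : ∀ (n : ℕ) (v : V (n + 1)), Finite {e : E n // rng n e = v})
  (hrec : ∀ (n : ℕ) (w : V n),
    μv n w = ∑' v : V (n + 1), Fmat src rng n v w * μv (n + 1) v)

include hfin hrec in
lemma keyId (n : ℕ) (w : V n) :
    μv n w = ∑' e : {e : E n // src n e = w}, μv (n + 1) (rng n e.1) := by
  rw [hrec n w, ← regroup src rng hfin n w (μv (n + 1))]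

/-- Base case: the level-`N` measure of a level-`N` cylinder. -/
lemma μap_cyl_self (N : ℕ) (z : PathSp src rng) :
    μap src rng junk hs μv N (cylSet src rng z N) = μv (N + 1) (rng N (z.1 N)) := by
  rw [μap_apply src rng junk hs μv N (cyl_measurable src rng z N)]
  rw [tsum_eq_single (cFrom src rng junk z N) ?_]
  · have hmem : pathOf src rng junk hs (cFrom src rng junk z N) ∈ cylSet src rng z N := by
      intro i hi
      rw [pathOf_coord src rng junk hs _ hi, cFrom_coord src rng junk z hi]
    rw [Set.indicator_of_mem hmem, Pi.one_apply, mul_one, wt,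
      cFrom_coord src rng junk z (le_refl N)]
  · intro c hc
    have hnm : pathOf src rng junk hs c ∉ cylSet src rng z N := by
      intro hmem
      refine hc (FCh.ext src rng junk fun i hi => ?_)
      rw [cFrom_coord src rng junk z hi, ← hmem i hi, pathOf_coord src rng junk hs c hi]
    rw [Set.indicator_of_notMem hnm, mul_zero]

/-- Gluing a one-step extension onto a finite chain. -/
def glue (N : ℕ) (p : Σ c : FCh src rng junk N,
    {e : E (N + 1) // src (N + 1) e = rng N (c.1 N)}) : FCh src rng junk (N + 1) := by
  refine ⟨Function.update p.1.1 (N + 1) p.2.1, fun i hi => ?_, fun i hi => ?_⟩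
  · rcases Nat.lt_succ_iff_lt_or_eq.mp hi with hi' | hi'
    · rw [Function.update_of_ne (by omega), Function.update_of_ne (by omega)]
      exact p.1.2.1 i hi'
    · subst hi'
      rw [Function.update_of_ne (by omega), Function.update_self]
      exact p.2.2.symm
  · rw [Function.update_of_ne (by omega)]
    exact p.1.2.2 i (by omega)

lemma glue_bijective (N : ℕ) : Function.Bijective (glue src rng junk N) := by
  constructor
  · rintro ⟨c, e⟩ ⟨c', e'⟩ h
    have hval : ∀ i, Function.update c.1 (N + 1) e.1 i = Function.update c'.1 (N + 1) e'.1 i :=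
      fun i => congrFun (congrArg Subtype.val h) i
    have hc : c = c' := by
      refine FCh.ext src rng junk fun i hi => ?_
      have := hval i
      rwa [Function.update_of_ne (by omega), Function.update_of_ne (by omega)] at this
    subst hc
    have he : e = e' := by
      apply Subtype.ext
      have := hval (N + 1)
      rwa [Function.update_self, Function.update_self] at this
    rw [he]
  · intro c'
    have hch : ∀ i, i < N → rng i (Function.update c'.1 (N + 1) (junk (N + 1)) i)
        = src (i + 1) (Function.update c'.1 (N + 1) (junk (N + 1)) (i + 1)) := by
      intro i hi
      rw [Function.update_of_ne (by omega), Function.update_of_ne (by omega)]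
      exact c'.2.1 i (by omega)
    have hjk : ∀ i, N < i → Function.update c'.1 (N + 1) (junk (N + 1)) i = junk i := by
      intro i hi
      rcases eq_or_ne i (N + 1) with hi' | hi'
      · subst hi'; exact Function.update_self _ _ _
      · rw [Function.update_of_ne hi']
        exact c'.2.2 i (by omega)
    set c : FCh src rng junk N := ⟨Function.update c'.1 (N + 1) (junk (N + 1)), hch, hjk⟩
      with hc
    have hcN : c.1 N = c'.1 N := Function.update_of_ne (by omega) _ _
    refine ⟨⟨c, ⟨c'.1 (N + 1), by rw [hcN]; exact (c'.2.1 N (by omega)).symm⟩⟩, ?_⟩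
    refine FCh.ext src rng junk fun i hi => ?_
    show Function.update c.1 (N + 1) (c'.1 (N + 1)) i = c'.1 i
    rcases eq_or_ne i (N + 1) with hi' | hi'
    · subst hi'; exact Function.update_self _ _ _
    · rw [Function.update_of_ne hi', hc]
      exact Function.update_of_ne hi' _ _

include hfin hrec in
lemma μap_stepCyl (N k : ℕ) (hk : k ≤ N) (z : PathSp src rng) :
    μap src rng junk hs μv (N + 1) (cylSet src rng z k)
      = μap src rng junk hs μv N (cylSet src rng z k) := by
  rw [μap_apply src rng junk hs μv (N + 1) (cyl_measurable src rng z k),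
    μap_apply src rng junk hs μv N (cyl_measurable src rng z k)]
  have heq : ∑' c' : FCh src rng junk (N + 1), wt src rng junk μv c'
      * (cylSet src rng z k).indicator 1 (pathOf src rng junk hs c')
      = ∑' (c : FCh src rng junk N) (e : {e : E (N + 1) // src (N + 1) e = rng N (c.1 N)}),
          wt src rng junk μv (glue src rng junk N ⟨c, e⟩)
            * (cylSet src rng z k).indicator 1
                (pathOf src rng junk hs (glue src rng junk N ⟨c, e⟩)) := by
    rw [← Equiv.tsum_eq (Equiv.ofBijective _ (glue_bijective src rng junk N))
      (fun c' => wt src rng junk μv c'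
        * (cylSet src rng z k).indicator 1 (pathOf src rng junk hs c'))]
    exact ENNReal.tsum_sigma
      (fun (c : FCh src rng junk N) (e : {e : E (N + 1) // src (N + 1) e = rng N (c.1 N)}) =>
        wt src rng junk μv (glue src rng junk N ⟨c, e⟩)
          * (cylSet src rng z k).indicator 1 (pathOf src rng junk hs (glue src rng junk N ⟨c, e⟩)))
  rw [heq]
  refine tsum_congr fun c => ?_
  have hind : ∀ e : {e : E (N + 1) // src (N + 1) e = rng N (c.1 N)},
      (cylSet src rng z k).indicator 1 (pathOf src rng junk hs (glue src rng junk N ⟨c, e⟩))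
        = (cylSet src rng z k).indicator (1 : PathSp src rng → ℝ≥0∞) (pathOf src rng junk hs c) := by
    intro e
    have hiff : pathOf src rng junk hs (glue src rng junk N ⟨c, e⟩) ∈ cylSet src rng z k
        ↔ pathOf src rng junk hs c ∈ cylSet src rng z k := by
      have hco : ∀ i ≤ k, (pathOf src rng junk hs (glue src rng junk N ⟨c, e⟩)).1 i
          = (pathOf src rng junk hs c).1 i := by
        intro i hi
        rw [pathOf_coord src rng junk hs _ (by omega), pathOf_coord src rng junk hs _ (by omega)]
        exact Function.update_of_ne (by omega) _ _
      constructor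
      · intro hmem i hi; rw [← hco i hi]; exact hmem i hi
      · intro hmem i hi; rw [hco i hi]; exact hmem i hi
    by_cases hmem : pathOf src rng junk hs c ∈ cylSet src rng z k
    · rw [Set.indicator_of_mem (hiff.2 hmem), Set.indicator_of_mem hmem]; rfl
    · rw [Set.indicator_of_notMem (fun h => hmem (hiff.1 h)), Set.indicator_of_notMem hmem]
  have hwt : ∀ e : {e : E (N + 1) // src (N + 1) e = rng N (c.1 N)},
      wt src rng junk μv (glue src rng junk N ⟨c, e⟩) = μv (N + 2) (rng (N + 1) e.1) := by
    intro e
    show μv (N + 2) (rng (N + 1) (Function.update c.1 (N + 1) e.1 (N + 1))) = _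
    rw [Function.update_self]
  calc ∑' e : {e : E (N + 1) // src (N + 1) e = rng N (c.1 N)},
        wt src rng junk μv (glue src rng junk N ⟨c, e⟩)
          * (cylSet src rng z k).indicator 1 (pathOf src rng junk hs (glue src rng junk N ⟨c, e⟩))
      = ∑' e : {e : E (N + 1) // src (N + 1) e = rng N (c.1 N)},
          μv (N + 2) (rng (N + 1) e.1)
            * (cylSet src rng z k).indicator 1 (pathOf src rng junk hs c) := by
        refine tsum_congr fun e => ?_
        rw [hind e, hwt e]
    _ = (∑' e : {e : E (N + 1) // src (N + 1) e = rng N (c.1 N)}, μv (N + 2) (rng (N + 1) e.1))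
          * (cylSet src rng z k).indicator 1 (pathOf src rng junk hs c) :=
        ENNReal.tsum_mul_right
    _ = wt src rng junk μv c * (cylSet src rng z k).indicator 1 (pathOf src rng junk hs c) := by
        rw [← keyId src rng μv hfin hrec (N + 1) (rng N (c.1 N))]
        rfl

include hfin hrec in
lemma μap_cyl {N k : ℕ} (hk : k ≤ N) (z : PathSp src rng) :
    μap src rng junk hs μv N (cylSet src rng z k) = μv (k + 1) (rng k (z.1 k)) := by
  induction N with
  | zero =>
    have : k = 0 := by omega
    subst this
    exact μap_cyl_self src rng junk hs μv 0 z
  | succ N ih =>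
    rcases Nat.lt_succ_iff_lt_or_eq.mp (Nat.lt_succ_of_le hk) with hk' | hk'
    · rw [μap_stepCyl src rng junk hs μv hfin hrec N k (by omega) z]
      exact ih (by omega)
    · subst hk'
      exact μap_cyl_self src rng junk hs μv (N + 1) z

include hfin hrec in
lemma μap_dtm {M N : ℕ} (h : M ≤ N) {s : Set (PathSp src rng)} (hd : Dtm src rng M s) :
    μap src rng junk hs μv N s = μap src rng junk hs μv M s := by
  rw [meas_decomp src rng junk hs hd, meas_decomp src rng junk hs hd]
  refine tsum_congr fun z => ?_
  rw [μap_cyl src rng junk hs μv hfin hrec h, μap_cyl src rng junk hs μv hfin hrec (le_refl M)]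

end eval

/-- Diagonal argument: from a sequence of paths whose coordinates are eventually
confined to finite sets, extract a limit path. -/
lemma diagonal (y : ℕ → PathSp src rng) (A : ∀ m, Set (E m)) (hA : ∀ m, (A m).Finite)
    (hmem : ∀ m J, m ≤ J → (y J).1 m ∈ A m) :
    ∃ z : PathSp src rng, ∀ M : ℕ, ∃ J, M ≤ J ∧ ∀ i ≤ M, (y J).1 i = z.1 i := by
  classical
  set P : ℕ → Set ℕ → Prop := fun m S => S.Infinite ∧ (∀ J ∈ S, m ≤ J) ∧
    (∀ J ∈ S, ∀ J' ∈ S, ∀ j, j < m → (y J).1 j = (y J').1 j) with hP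
  have base : P 0 Set.univ := by
    refine ⟨Set.infinite_univ, fun J _ => Nat.zero_le J, fun J _ J' _ j hj => absurd hj (by omega)⟩
  have step : ∀ m S, P m S → ∃ S', S' ⊆ S ∧ P (m + 1) S' := by
    intro m S hS
    set T : Set ℕ := S \ Set.Iio (m + 1) with hT
    have hTinf : T.Infinite := hS.1.diff (Set.finite_Iio _)
    haveI : Infinite ↥T := hTinf.to_subtype
    haveI : Finite ↥(A m) := (hA m).to_subtype
    set φ : ↥T → ↥(A m) := fun J => ⟨(y J.1).1 m, hmem m J.1 (by
      have := J.2; simp only [hT, Set.mem_diff, Set.mem_Iio, not_lt] at this; omega)⟩ with hφ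
    obtain ⟨b, hb⟩ := Finite.exists_infinite_fiber φ
    refine ⟨Subtype.val '' (φ ⁻¹' {b}), ?_, ?_, ?_, ?_⟩
    · rintro J ⟨t, _, rfl⟩
      exact t.2.1
    · exact (Set.infinite_coe_iff.mp hb).image (Subtype.val_injective.injOn)
    · rintro J ⟨t, _, rfl⟩
      have := t.2
      simp only [hT, Set.mem_diff, Set.mem_Iio, not_lt] at this
      omega
    · rintro J ⟨t, ht, rfl⟩ J' ⟨t', ht', rfl⟩ j hj
      rcases Nat.lt_succ_iff_lt_or_eq.mp hj with hj' | hj'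
      · exact hS.2.2 t.1 t.2.1 t'.1 t'.2.1 j hj'
      · subst hj'
        have h1 : (y t.1).1 j = b.1 := congrArg Subtype.val ht
        have h2 : (y t'.1).1 j = b.1 := congrArg Subtype.val ht'
        rw [h1, h2]
  -- iterate
  let g : ∀ m : ℕ, {S : Set ℕ // P m S} := fun m => Nat.rec ⟨Set.univ, base⟩
    (fun m prev => ⟨(step m prev.1 prev.2).choose, (step m prev.1 prev.2).choose_spec.2⟩) m
  have hsub : ∀ m, (g (m + 1)).1 ⊆ (g m).1 := fun m => (step m (g m).1 (g m).2).choose_spec.1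
  have hsub' : ∀ m M, m ≤ M → (g M).1 ⊆ (g m).1 := by
    intro m M hm
    induction M with
    | zero => have : m = 0 := by omega
              subst this; exact subset_rfl
    | succ M ih =>
      rcases Nat.lt_succ_iff_lt_or_eq.mp (Nat.lt_succ_of_le hm) with h | h
      · exact (hsub M).trans (ih (by omega))
      · subst h; exact subset_rfl
  have hpick : ∀ m, ∃ J, J ∈ (g m).1 := fun m => (g m).2.1.nonempty
  choose pick hpickmem using hpick
  set e : ∀ m, E m := fun m => (y (pick (m + 1))).1 m with he
  have hagree : ∀ M J, J ∈ (g M).1 → ∀ j, j < M → (y J).1 j = e j := by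
    intro M J hJ j hj
    have hJ' : J ∈ (g (j + 1)).1 := hsub' (j + 1) M (by omega) hJ
    exact (g (j + 1)).2.2.2 J hJ' (pick (j + 1)) (hpickmem (j + 1)) j (by omega)
  have hchain : ∀ m, rng m (e m) = src (m + 1) (e (m + 1)) := by
    intro m
    have hJ : pick (m + 2) ∈ (g (m + 2)).1 := hpickmem (m + 2)
    have h1 : (y (pick (m + 2))).1 m = e m := hagree (m + 2) _ hJ m (by omega)
    have h2 : (y (pick (m + 2))).1 (m + 1) = e (m + 1) := hagree (m + 2) _ hJ (m + 1) (by omega)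
    rw [← h1, ← h2]
    exact (y (pick (m + 2))).2 m
  refine ⟨⟨e, hchain⟩, fun M => ?_⟩
  obtain ⟨J, hJ, hJM⟩ := (g (M + 1)).2.1.exists_gt M
  exact ⟨J, le_of_lt hJM, fun i hi => hagree (M + 1) J hJ i (by omega)⟩

section core

variable (hfin : ∀ (n : ℕ) (v : V (n + 1)), Finite {e : E n // rng n e = v})
  (hrec : ∀ (n : ℕ) (w : V n),
    μv n w = ∑' v : V (n + 1), Fmat src rng n v w * μv (n + 1) v)
  (htop : ∀ (n : ℕ) (v : V n), μv n v ≠ ⊤)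

lemma geom_aux (ε : ℝ≥0∞) : ∑' m : ℕ, ε * 2⁻¹ ^ (m + 1) = ε := by
  rw [ENNReal.tsum_mul_left]
  have h1 : ∑' m : ℕ, (2⁻¹ : ℝ≥0∞) ^ (m + 1) = (∑' m : ℕ, (2⁻¹ : ℝ≥0∞) ^ m) * 2⁻¹ := by
    rw [← ENNReal.tsum_mul_right]
    exact tsum_congr fun m => (pow_succ _ _)
  rw [h1, ENNReal.tsum_geometric]
  have h2 : (1 : ℝ≥0∞) - 2⁻¹ = 2⁻¹ := by
    rw [ENNReal.one_sub_inv_two]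
  rw [h2, inv_inv]
  have h3 : (2 : ℝ≥0∞) * 2⁻¹ = 1 :=
    ENNReal.mul_inv_cancel (by norm_num) (by norm_num)
  rw [h3, mul_one]

include junk hs hfin hrec htop in
/-- The core countable subadditivity inequality. -/
lemma core (x : PathSp src rng) (n : ℕ) (t : ℕ → Set (PathSp src rng))
    (g : ℕ → ℝ≥0∞) (zz : ℕ → PathSp src rng) (kk : ℕ → ℕ)
    (ht : ∀ i, t i = ∅ ∨ (t i = cylSet src rng (zz i) (kk i) ∧
      μv (kk i + 1) (rng (kk i) ((zz i).1 (kk i))) ≤ g i))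
    (hcov : cylSet src rng x n ⊆ ⋃ i, t i)
    (ε : ℝ≥0∞) (hε : 0 < ε) :
    μv (n + 1) (rng n (x.1 n)) ≤ (∑' i, g i) + ε := by
  classical
  -- Choose finite sets of edges capturing most of the mass at each level.
  have hAex : ∀ m, ∃ A : Set (E m), A.Finite ∧ x.1 m ∈ A ∧ (n < m →
      μap src rng junk hs μv m (cylSet src rng x n ∩ {y | y.1 m ∉ A}) ≤ ε * 2⁻¹ ^ (m + 1)) := by
    intro m
    by_cases hm : n < m
    · have hne : Nonempty (E m) := ⟨x.1 m⟩
      obtain ⟨f, hf⟩ := exists_surjective_nat (E m)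
      set s : ℕ → Set (PathSp src rng) :=
        fun k => cylSet src rng x n ∩ {y | y.1 m ∉ f '' Set.Iio k} with hsdef
      have hmeas : ∀ k, MeasurableSet (s k) := by
        intro k
        exact (cyl_measurable src rng x n).inter
          (((measurable_pi_apply m).comp measurable_subtype_coe)
            (MeasurableSet.of_discrete (s := {a : E m | a ∉ f '' Set.Iio k})))
      have hanti : Antitone s := by
        intro k k' hk
        refine Set.inter_subset_inter_right _ fun y hy hmem => hy ?_
        exact Set.image_mono (Set.Iio_subset_Iio hk) hmem
      have hempty : ⋂ k, s k = ∅ := by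
        refine Set.eq_empty_iff_forall_notMem.2 fun y hy => ?_
        obtain ⟨k₀, hk₀⟩ := hf (y.1 m)
        exact (Set.mem_iInter.1 hy (k₀ + 1)).2
          ⟨k₀, Set.mem_Iio.2 (Nat.lt_succ_self _), hk₀⟩
      have hfin0 : μap src rng junk hs μv m (s 0) ≠ ⊤ := by
        refine ne_top_of_le_ne_top (htop (n + 1) (rng n (x.1 n))) ?_
        calc μap src rng junk hs μv m (s 0) ≤ μap src rng junk hs μv m (cylSet src rng x n) :=
              measure_mono (Set.inter_subset_left)
          _ = μv (n + 1) (rng n (x.1 n)) := μap_cyl src rng junk hs μv hfin hrec (by omega) x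
      have hten : Filter.Tendsto (fun k => μap src rng junk hs μv m (s k)) Filter.atTop (nhds 0) := by
        have := MeasureTheory.tendsto_measure_iInter_atTop (μ := μap src rng junk hs μv m)
          (fun k => (hmeas k).nullMeasurableSet) hanti ⟨0, hfin0⟩
        rwa [hempty, measure_empty] at this
      have hε' : (0 : ℝ≥0∞) < ε * 2⁻¹ ^ (m + 1) :=
        ENNReal.mul_pos hε.ne' (pow_ne_zero _ (ENNReal.inv_ne_zero.mpr ENNReal.ofNat_ne_top))
      obtain ⟨k, hk⟩ := (hten.eventually (gt_mem_nhds hε')).exists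
      refine ⟨insert (x.1 m) (f '' Set.Iio k), ((Set.finite_Iio _).image f).insert _,
        Set.mem_insert _ _, fun _ => ?_⟩
      refine le_trans (measure_mono ?_) hk.le
      refine Set.inter_subset_inter_right _ fun y hy hmem => hy (Set.mem_insert_of_mem _ hmem)
    · exact ⟨{x.1 m}, Set.finite_singleton _, Set.mem_singleton _, fun h => absurd h hm⟩
  choose A hAfin hAx hAesc using hAex
  set D : ℕ → Set (PathSp src rng) :=
    fun J => cylSet src rng x n \ ⋃ i ∈ Finset.range J, t i with hD
  by_cases hW : ∀ J, (D J ∩ {y : PathSp src rng | ∀ m ≤ J, y.1 m ∈ A m}).Nonempty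
  · -- diagonal argument gives a path escaping the cover : contradiction
    exfalso
    choose yseq hyseq using hW
    obtain ⟨z, hz⟩ := diagonal src rng yseq A hAfin
      (fun m J hm => (hyseq J).2 m hm)
    have hzcyl : z ∈ cylSet src rng x n := by
      intro i hi
      obtain ⟨J, hJ, hJa⟩ := hz n
      rw [← hJa i hi]
      exact ((hyseq J).1).1 i hi
    obtain ⟨i₀, hi₀⟩ := Set.mem_iUnion.1 (hcov hzcyl)
    rcases ht i₀ with hti | ⟨hti, _⟩
    · rw [hti] at hi₀; exact hi₀
    · rw [hti] at hi₀
      obtain ⟨J, hJ, hJa⟩ := hz (max (kk i₀) (i₀ + 1))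
      have hJmem : yseq J ∈ cylSet src rng (zz i₀) (kk i₀) := by
        intro i hi
        rw [hJa i (le_trans hi (le_max_left _ _))]
        exact hi₀ i hi
      have : yseq J ∉ t i₀ := by
        intro hmem
        exact ((hyseq J).1).2 (Set.mem_biUnion (Finset.mem_range.2 (by omega)) hmem)
      rw [hti] at this
      exact this hJmem
  · push_neg at hW
    obtain ⟨J, hJ⟩ := hW
    set N : ℕ := max n (max J ((Finset.range J).sup kk)) with hN
    have hval : μv (n + 1) (rng n (x.1 n)) = μap src rng junk hs μv N (cylSet src rng x n) :=
      (μap_cyl src rng junk hs μv hfin hrec (le_max_left _ _) x).symm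
    set Esc : ℕ → Set (PathSp src rng) :=
      fun m => cylSet src rng x n ∩ {y | y.1 m ∉ A m} with hEsc
    have hsplit : cylSet src rng x n ⊆
        (⋃ m ∈ Finset.range (J + 1), Esc m) ∪ ⋃ i ∈ Finset.range J, t i := by
      intro y hy
      by_cases hyB : ∀ m ≤ J, y.1 m ∈ A m
      · right
        by_contra hnot
        exact Set.eq_empty_iff_forall_notMem.1 hJ y ⟨⟨hy, hnot⟩, hyB⟩
      · left
        push_neg at hyB
        obtain ⟨m, hm, hmA⟩ := hyB
        exact Set.mem_biUnion (Finset.mem_range.2 (by omega)) ⟨hy, hmA⟩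
    have hEscBound : ∀ m, m ∈ Finset.range (J + 1) →
        μap src rng junk hs μv N (Esc m) ≤ ε * 2⁻¹ ^ (m + 1) := by
      intro m hm
      by_cases hmn : n < m
      · have hdtm : Dtm src rng m (Esc m) := by
          intro y y' hyy hy
          constructor
          · intro i hi
            rw [← hyy i (by omega)]
            exact hy.1 i hi
          · show y'.1 m ∉ A m
            rw [← hyy m le_rfl]
            exact hy.2
        rw [μap_dtm src rng junk hs μv hfin hrec
          (le_trans (Finset.mem_range.1 hm |> Nat.lt_succ_iff.1) (le_trans (le_max_left _ _) (le_max_right n _))) hdtm]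
        exact hAesc m hmn
      · have : Esc m = ∅ := by
          ext y
          simp only [hEsc, Set.mem_inter_iff, Set.mem_setOf_eq, Set.mem_empty_iff_false,
            iff_false, not_and]
          intro hy hmA
          exact hmA (by rw [hy m (by omega)]; exact hAx m)
        rw [this, measure_empty]
        exact zero_le
    calc μv (n + 1) (rng n (x.1 n))
        = μap src rng junk hs μv N (cylSet src rng x n) := hval
      _ ≤ μap src rng junk hs μv N ((⋃ m ∈ Finset.range (J + 1), Esc m) ∪ ⋃ i ∈ Finset.range J, t i) :=
          measure_mono hsplit
      _ ≤ μap src rng junk hs μv N (⋃ m ∈ Finset.range (J + 1), Esc m)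
            + μap src rng junk hs μv N (⋃ i ∈ Finset.range J, t i) := measure_union_le _ _
      _ ≤ (∑ m ∈ Finset.range (J + 1), μap src rng junk hs μv N (Esc m))
            + ∑ i ∈ Finset.range J, μap src rng junk hs μv N (t i) :=
          add_le_add (measure_biUnion_finset_le _ _) (measure_biUnion_finset_le _ _)
      _ ≤ (∑ m ∈ Finset.range (J + 1), ε * 2⁻¹ ^ (m + 1)) + ∑ i ∈ Finset.range J, g i := by
          refine add_le_add (Finset.sum_le_sum hEscBound) (Finset.sum_le_sum fun i hi => ?_)
          rcases ht i with hti | ⟨hti, htv⟩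
          · rw [hti, measure_empty]; exact zero_le
          · rw [hti, μap_cyl src rng junk hs μv hfin hrec ?_ (zz i)]
            · exact htv
            · exact le_trans (Finset.le_sup hi) (le_trans (le_max_right J _) (le_max_right n _))
      _ ≤ ε + ∑' i, g i := by
          refine add_le_add ?_ (ENNReal.sum_le_tsum _)
          calc ∑ m ∈ Finset.range (J + 1), ε * 2⁻¹ ^ (m + 1)
              ≤ ∑' m : ℕ, ε * 2⁻¹ ^ (m + 1) := ENNReal.sum_le_tsum _
            _ = ε := geom_aux ε
      _ = (∑' i, g i) + ε := add_comm _ _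

end core

section build

variable (hfin : ∀ (n : ℕ) (v : V (n + 1)), Finite {e : E n // rng n e = v})
  (hrec : ∀ (n : ℕ) (w : V n),
    μv n w = ∑' v : V (n + 1), Fmat src rng n v w * μv (n + 1) v)
  (htop : ∀ (n : ℕ) (v : V n), μv n v ≠ ⊤)

lemma mem_cyl_self (z : PathSp src rng) (k : ℕ) : z ∈ cylSet src rng z k :=
  fun _ _ => rfl

lemma cyl_eq_of_mem {z y : PathSp src rng} {k : ℕ} (h : y ∈ cylSet src rng z k) :
    cylSet src rng z k = cylSet src rng y k := by
  ext u
  exact ⟨fun hu i hi => (hu i hi).trans (h i hi).symm, fun hu i hi => (hu i hi).trans (h i hi)⟩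

lemma cyl_congr {z z' : PathSp src rng} {k : ℕ} (h : ∀ i ≤ k, z.1 i = z'.1 i) :
    cylSet src rng z k = cylSet src rng z' k :=
  cyl_eq_of_mem src rng (fun i hi => (h i hi).symm)

lemma cyl_subset_of_le {z : PathSp src rng} {k k' : ℕ} (h : k' ≤ k) :
    cylSet src rng z k ⊆ cylSet src rng z k' :=
  fun _ hu i hi => hu i (le_trans hi h)

open scoped Classical in
/-- The generating set function for the outer measure. -/
noncomputable def mfn (s : Set (PathSp src rng)) : ℝ≥0∞ :=
  if s = ∅ then 0 else
    ⨅ (z : PathSp src rng) (k : ℕ) (_ : s = cylSet src rng z k), μv (k + 1) (rng k (z.1 k))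

lemma mfn_empty : mfn src rng μv ∅ = 0 := if_pos rfl

lemma mfn_cyl_le (z : PathSp src rng) (k : ℕ) :
    mfn src rng μv (cylSet src rng z k) ≤ μv (k + 1) (rng k (z.1 k)) := by
  rw [mfn, if_neg (Set.nonempty_iff_ne_empty.1 ⟨z, mem_cyl_self src rng z k⟩)]
  exact iInf_le_of_le z (iInf_le_of_le k (iInf_le _ rfl))

/-- The outer measure. -/
noncomputable def om : OuterMeasure (PathSp src rng) :=
  OuterMeasure.ofFunction (mfn src rng μv) (mfn_empty src rng μv)

lemma om_cyl_le (z : PathSp src rng) (k : ℕ) :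
    om src rng μv (cylSet src rng z k) ≤ μv (k + 1) (rng k (z.1 k)) :=
  le_trans (OuterMeasure.ofFunction_le _) (mfn_cyl_le src rng μv z k)

include junk hs hfin hrec htop in
lemma om_cyl (z : PathSp src rng) (k : ℕ) :
    om src rng μv (cylSet src rng z k) = μv (k + 1) (rng k (z.1 k)) := by
  refine le_antisymm (om_cyl_le src rng μv z k) ?_
  rw [om, OuterMeasure.ofFunction_apply]
  refine le_iInf fun t => le_iInf fun hcov => ?_
  refine ENNReal.le_of_forall_pos_le_add fun ε hε hlt => ?_
  have hne : ∀ i, mfn src rng μv (t i) ≠ ⊤ := ENNReal.ne_top_of_tsum_ne_top hlt.ne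
  have hδ : ∀ i, (0 : ℝ≥0∞) < (ε : ℝ≥0∞) / 2 * 2⁻¹ ^ (i + 1) := by
    intro i
    refine ENNReal.mul_pos ?_ (pow_ne_zero _ (ENNReal.inv_ne_zero.mpr ENNReal.ofNat_ne_top))
    exact (ENNReal.div_pos (by exact_mod_cast hε.ne') ENNReal.ofNat_ne_top).ne'
  have hrep : ∀ i, ∃ (zi : PathSp src rng) (ki : ℕ), t i = ∅ ∨
      (t i = cylSet src rng zi ki ∧
        μv (ki + 1) (rng ki (zi.1 ki)) ≤ mfn src rng μv (t i) + (ε : ℝ≥0∞) / 2 * 2⁻¹ ^ (i + 1)) := by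
    intro i
    by_cases hti : t i = ∅
    · exact ⟨z, 0, Or.inl hti⟩
    · have hlt' : mfn src rng μv (t i)
          < mfn src rng μv (t i) + (ε : ℝ≥0∞) / 2 * 2⁻¹ ^ (i + 1) :=
        ENNReal.lt_add_right (hne i) (hδ i).ne'
      have hiInf_eq : mfn src rng μv (t i) = ⨅ (z : PathSp src rng) (k : ℕ)
          (_ : t i = cylSet src rng z k), μv (k + 1) (rng k (z.1 k)) := by
        rw [mfn, if_neg hti]
      have hlt'' := lt_of_eq_of_lt hiInf_eq.symm hlt'
      rw [iInf_lt_iff] at hlt''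
      obtain ⟨zi, hzi⟩ := hlt''
      rw [iInf_lt_iff] at hzi
      obtain ⟨ki, hki⟩ := hzi
      rw [iInf_lt_iff] at hki
      obtain ⟨hrep, hval⟩ := hki
      exact ⟨zi, ki, Or.inr ⟨hrep, hval.le⟩⟩
  choose zz kk hti using hrep
  have hcore := core src rng junk hs μv hfin hrec htop z k t
    (fun i => mfn src rng μv (t i) + (ε : ℝ≥0∞) / 2 * 2⁻¹ ^ (i + 1)) zz kk hti hcov
    ((ε : ℝ≥0∞) / 2) (ENNReal.div_pos (by exact_mod_cast hε.ne') ENNReal.ofNat_ne_top)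
  calc μv (k + 1) (rng k (z.1 k))
      ≤ (∑' i, (mfn src rng μv (t i) + (ε : ℝ≥0∞) / 2 * 2⁻¹ ^ (i + 1))) + (ε : ℝ≥0∞) / 2 :=
        hcore
    _ = ((∑' i, mfn src rng μv (t i)) + (ε : ℝ≥0∞) / 2) + (ε : ℝ≥0∞) / 2 := by
        rw [ENNReal.tsum_add, geom_aux]
    _ = (∑' i, mfn src rng μv (t i)) + (ε : ℝ≥0∞) := by
        rw [add_assoc, ENNReal.add_halves]

include junk hs hfin hrec in
lemma om_dtm_le {N : ℕ} {S : Set (PathSp src rng)} (hd : Dtm src rng N S) :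
    om src rng μv S ≤ μap src rng junk hs μv N S := by
  rw [meas_decomp src rng junk hs hd]
  calc om src rng μv S
      ≤ ∑' zc : ↥(rp src rng junk hs N '' S), om src rng μv (cylSet src rng zc.1 N) := by
        conv_lhs => rw [partition src rng junk hs hd]
        exact measure_biUnion_le _ (image_rp_countable src rng junk hs S) _
    _ ≤ ∑' zc : ↥(rp src rng junk hs N '' S), μap src rng junk hs μv N (cylSet src rng zc.1 N) := by
        refine ENNReal.tsum_le_tsum fun zc => ?_
        rw [μap_cyl src rng junk hs μv hfin hrec (le_refl N)]
        exact om_cyl_le src rng μv zc.1 N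
    _ = _ := rfl

include junk hs hfin hrec htop in
lemma carath_cyl (z : PathSp src rng) (k : ℕ) :
    (om src rng μv).IsCaratheodory (cylSet src rng z k) := by
  have key : ∀ t' : Set (PathSp src rng),
      om src rng μv (t' ∩ cylSet src rng z k) + om src rng μv (t' \ cylSet src rng z k)
        ≤ mfn src rng μv t' := by
    intro t'
    by_cases hne : t' = ∅
    · subst hne
      simp only [Set.empty_inter, Set.empty_diff, measure_empty, add_zero]
      exact zero_le
    · have hiInf_eq : mfn src rng μv t' = ⨅ (z' : PathSp src rng) (k' : ℕ)
          (_ : t' = cylSet src rng z' k'), μv (k' + 1) (rng k' (z'.1 k')) := by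
        rw [mfn, if_neg hne]
      rw [hiInf_eq]
      refine le_iInf fun z' => le_iInf fun k' => le_iInf fun hrepr => ?_
      subst hrepr
      by_cases hint : cylSet src rng z' k' ∩ cylSet src rng z k = ∅
      · rw [hint, measure_empty, zero_add,
          sdiff_eq_left.2 (Set.disjoint_iff_inter_eq_empty.2 hint)]
        exact om_cyl_le src rng μv z' k'
      · obtain ⟨y, hy1, hy2⟩ := Set.nonempty_iff_ne_empty.2 hint
        rcases le_total k' k with hkk | hkk
        · -- cylSet z k ⊆ cylSet z' k'
          have hsub : cylSet src rng z k ⊆ cylSet src rng z' k' := by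
            rw [cyl_eq_of_mem src rng hy2, cyl_eq_of_mem src rng hy1]
            exact cyl_subset_of_le src rng hkk
          have hdtm : Dtm src rng k (cylSet src rng z' k' \ cylSet src rng z k) := by
            intro u u' huu hu
            refine ⟨fun i hi => ?_, fun hmem => hu.2 fun i hi => ?_⟩
            · rw [← huu i (le_trans hi hkk)]
              exact hu.1 i hi
            · rw [huu i hi]
              exact hmem i hi
          have hunion : cylSet src rng z k ∪ (cylSet src rng z' k' \ cylSet src rng z k)
              = cylSet src rng z' k' := Set.union_diff_cancel hsub
          have hadd : μap src rng junk hs μv k (cylSet src rng z' k')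
              = μap src rng junk hs μv k (cylSet src rng z k)
                + μap src rng junk hs μv k (cylSet src rng z' k' \ cylSet src rng z k) := by
            conv_lhs => rw [← hunion]
            exact measure_union Set.disjoint_sdiff_right
              (dtm_measurable src rng junk hs hdtm)
          have h1 : om src rng μv (cylSet src rng z' k' ∩ cylSet src rng z k)
              ≤ μv (k + 1) (rng k (z.1 k)) := by
            rw [Set.inter_eq_self_of_subset_right hsub]
            exact om_cyl_le src rng μv z k
          have h2 : om src rng μv (cylSet src rng z' k' \ cylSet src rng z k)
              ≤ μap src rng junk hs μv k (cylSet src rng z' k' \ cylSet src rng z k) :=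
            om_dtm_le src rng junk hs μv hfin hrec hdtm
          calc om src rng μv (cylSet src rng z' k' ∩ cylSet src rng z k)
                + om src rng μv (cylSet src rng z' k' \ cylSet src rng z k)
              ≤ μv (k + 1) (rng k (z.1 k))
                + μap src rng junk hs μv k (cylSet src rng z' k' \ cylSet src rng z k) :=
                add_le_add h1 h2
            _ = μap src rng junk hs μv k (cylSet src rng z k)
                + μap src rng junk hs μv k (cylSet src rng z' k' \ cylSet src rng z k) := by
                rw [μap_cyl src rng junk hs μv hfin hrec (le_refl k)]
            _ = μap src rng junk hs μv k (cylSet src rng z' k') := hadd.symm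
            _ = μv (k' + 1) (rng k' (z'.1 k')) :=
                μap_cyl src rng junk hs μv hfin hrec hkk z'
        · -- cylSet z' k' ⊆ cylSet z k
          have hsub : cylSet src rng z' k' ⊆ cylSet src rng z k := by
            rw [cyl_eq_of_mem src rng hy1, cyl_eq_of_mem src rng hy2]
            exact cyl_subset_of_le src rng hkk
          rw [Set.inter_eq_self_of_subset_left hsub,
            Set.diff_eq_empty.2 hsub, measure_empty, add_zero]
          exact om_cyl_le src rng μv z' k'
  intro t
  refine le_antisymm ?_ ?_
  · conv_lhs => rw [← Set.inter_union_diff t (cylSet src rng z k)]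
    exact measure_union_le _ _
  · conv_rhs => rw [om, OuterMeasure.ofFunction_apply]
    refine le_iInf fun u => le_iInf fun hcov => ?_
    have hc1 : om src rng μv (t ∩ cylSet src rng z k)
        ≤ ∑' i, om src rng μv (u i ∩ cylSet src rng z k) := by
      refine le_trans (measure_mono ?_) (measure_iUnion_le _)
      rw [← Set.iUnion_inter]
      exact Set.inter_subset_inter_left _ hcov
    have hc2 : om src rng μv (t \ cylSet src rng z k)
        ≤ ∑' i, om src rng μv (u i \ cylSet src rng z k) := by
      refine le_trans (measure_mono ?_) (measure_iUnion_le _)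
      rw [← Set.iUnion_diff]
      exact Set.diff_subset_diff_left hcov
    calc om src rng μv (t ∩ cylSet src rng z k) + om src rng μv (t \ cylSet src rng z k)
        ≤ (∑' i, om src rng μv (u i ∩ cylSet src rng z k))
          + ∑' i, om src rng μv (u i \ cylSet src rng z k) := add_le_add hc1 hc2
      _ = ∑' i, (om src rng μv (u i ∩ cylSet src rng z k)
          + om src rng μv (u i \ cylSet src rng z k)) := (ENNReal.tsum_add).symm
      _ ≤ ∑' i, mfn src rng μv (u i) := ENNReal.tsum_le_tsum fun i => key (u i)

include junk hs in
lemma genEq : (inferInstance : MeasurableSpace (PathSp src rng))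
    = MeasurableSpace.generateFrom
        {s | ∃ (zc : PathSp src rng) (kc : ℕ), s = cylSet src rng zc kc} := by
  set mg := MeasurableSpace.generateFrom
    {s | ∃ (zc : PathSp src rng) (kc : ℕ), s = cylSet src rng zc kc} with hmg
  refine le_antisymm ?_ (MeasurableSpace.generateFrom_le ?_)
  · have hsing : ∀ (i : ℕ) (e : E i),
        MeasurableSet[mg] {y : PathSp src rng | y.1 i = e} := by
      intro i e
      have hdtm : Dtm src rng i {y : PathSp src rng | y.1 i = e} := by
        intro u u' huu hu
        show u'.1 i = e
        rw [← huu i le_rfl]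
        exact hu
      rw [partition src rng junk hs hdtm]
      refine MeasurableSet.biUnion (image_rp_countable src rng junk hs _) fun zc _ =>
        MeasurableSpace.measurableSet_generateFrom ⟨zc, i, rfl⟩
    have hcoord : ∀ i, @Measurable (PathSp src rng) (E i) mg _ (fun y => y.1 i) := by
      intro i
      exact @measurable_to_countable' (E i) (PathSp src rng) _ _ mg _
        (fun e => hsing i e)
    have hval : @Measurable (PathSp src rng) (∀ i, E i) mg _ Subtype.val :=
      (@measurable_pi_iff _ _ _ mg _).mpr hcoord
    exact measurable_iff_comap_le.1 hval
  · rintro s ⟨zc, kc, rfl⟩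
    exact cyl_measurable src rng zc kc

include junk hs hfin hrec htop in
lemma carath_le : (inferInstance : MeasurableSpace (PathSp src rng))
    ≤ (om src rng μv).caratheodory := by
  rw [genEq src rng junk hs]
  refine MeasurableSpace.generateFrom_le ?_
  rintro s ⟨zc, kc, rfl⟩
  exact (OuterMeasure.isCaratheodory_iff _).2
    (carath_cyl src rng junk hs μv hfin hrec htop zc kc)

include junk hs hfin hrec htop in
lemma unique_meas (μ₁ μ₂ : Measure (PathSp src rng))
    (h₁ : ∀ (n : ℕ) (x : PathSp src rng),
      μ₁ (cylSet src rng x n) = μv (n + 1) (rng n (x.1 n)))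
    (h₂ : ∀ (n : ℕ) (x : PathSp src rng),
      μ₂ (cylSet src rng x n) = μv (n + 1) (rng n (x.1 n))) : μ₁ = μ₂ := by
  refine Measure.ext_of_generateFrom_of_cover_subset
    (genEq src rng junk hs)
    (S := {s | ∃ (zc : PathSp src rng) (kc : ℕ), s = cylSet src rng zc kc})
    (T := {s | ∃ zc : PathSp src rng, s = cylSet src rng zc 0}) ?_ ?_ ?_ ?_ ?_ ?_
  · rintro s ⟨z1, k1, rfl⟩ t ⟨z2, k2, rfl⟩ hst
    obtain ⟨y, hy1, hy2⟩ := hst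
    rcases le_total k1 k2 with hkk | hkk
    · have hsub : cylSet src rng z2 k2 ⊆ cylSet src rng z1 k1 := by
        rw [cyl_eq_of_mem src rng hy1, cyl_eq_of_mem src rng hy2]
        exact cyl_subset_of_le src rng hkk
      rw [Set.inter_eq_self_of_subset_right hsub]
      exact ⟨z2, k2, rfl⟩
    · have hsub : cylSet src rng z1 k1 ⊆ cylSet src rng z2 k2 := by
        rw [cyl_eq_of_mem src rng hy2, cyl_eq_of_mem src rng hy1]
        exact cyl_subset_of_le src rng hkk
      rw [Set.inter_eq_self_of_subset_left hsub]
      exact ⟨z1, k1, rfl⟩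
  · rintro s ⟨zc, rfl⟩
    exact ⟨zc, 0, rfl⟩
  · have hsubr : Set.range (rp src rng junk hs 0)
        ⊆ Set.range (pathOf src rng junk hs (N := 0)) := by
      rintro u ⟨v, rfl⟩
      exact ⟨cFrom src rng junk v 0, rfl⟩
    have hc0 : (Set.range (rp src rng junk hs 0)).Countable :=
      (Set.countable_range _).mono hsubr
    refine Set.Countable.mono ?_ (hc0.image (fun zc => cylSet src rng zc 0))
    rintro s ⟨zc, rfl⟩
    exact ⟨rp src rng junk hs 0 zc, ⟨zc, rfl⟩,
      cyl_congr src rng fun i hi => rp_coord src rng junk hs 0 zc hi⟩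
  · refine Set.eq_univ_iff_forall.2 fun y => ?_
    exact ⟨cylSet src rng y 0, ⟨y, rfl⟩, mem_cyl_self src rng y 0⟩
  · rintro s ⟨zc, rfl⟩
    rw [h₁ 0 zc]
    exact htop 1 _
  · rintro s ⟨zc, kc, rfl⟩
    rw [h₁ kc zc, h₂ kc zc]

include junk hs hfin hrec htop in
theorem exists_unique_tailInv :
    ∃! μ : Measure (PathSp src rng), TailInv src rng μ ∧
      ∀ (n : ℕ) (x : PathSp src rng),
        μ (cylSet src rng x n) = μv (n + 1) (rng n (x.1 n)) := by
  set μm : Measure (PathSp src rng) :=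
    (om src rng μv).toMeasure (carath_le src rng junk hs μv hfin hrec htop) with hμm
  have hval : ∀ (n : ℕ) (x : PathSp src rng),
      μm (cylSet src rng x n) = μv (n + 1) (rng n (x.1 n)) := by
    intro n x
    rw [hμm, MeasureTheory.toMeasure_apply _ _ (cyl_measurable src rng x n)]
    exact om_cyl src rng junk hs μv hfin hrec htop x n
  refine ⟨μm, ⟨?_, hval⟩, ?_⟩
  · intro n x y hxy
    rw [hval n x, hval n y, hxy]
  · rintro μ' ⟨_, hval'⟩
    exact unique_meas src rng junk hs μv hfin hrec htop μ' μm hval' hval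

end build

end exist

end Brat

/-- (forward) If `μ` is a tail invariant (probability) measure on the
path-space of a generalized Bratteli diagram, then the vectors `μv n` of cylinder
measures satisfy `Fmatᵀ • μv (n+1) = μv n`.  (converse) Any sequence of nonnegative
vectors with `Fmatᵀ • μv (n+1) = μv n` (and finite entries) determines a unique tail
invariant measure with those cylinder values. -/
theorem tail_invariant_measures_correspond_to_vector_sequences
    {V E : ℕ → Type*} [∀ n, Countable (V n)] [∀ n, Countable (E n)]
    [∀ n, MeasurableSpace (E n)] [∀ n, DiscreteMeasurableSpace (E n)]
    (src : ∀ n, E n → V n) (rng : ∀ n, E n → V (n + 1))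
    (hfin : ∀ (n : ℕ) (v : V (n + 1)), Finite {e : E n // rng n e = v})
    (hr : ∀ (n : ℕ) (v : V (n + 1)), ∃ e : E n, rng n e = v)
    (hs : ∀ (n : ℕ) (v : V n), ∃ e : E n, src n e = v) :
    (∀ μ : Measure (PathSp src rng), IsProbabilityMeasure μ → TailInv src rng μ →
      ∀ μv : ∀ n, V n → ℝ≥0∞,
        (∀ (n : ℕ) (x : PathSp src rng),
          μ (cylSet src rng x n) = μv (n + 1) (rng n (x.1 n))) →
        (∀ v : V 0, μv 0 v = μ {y : PathSp src rng | src 0 (y.1 0) = v}) →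
        ∀ (n : ℕ) (w : V n),
          μv n w = ∑' v : V (n + 1), Fmat src rng n v w * μv (n + 1) v) ∧
    (∀ μv : ∀ n, V n → ℝ≥0∞,
      (∀ (n : ℕ) (w : V n),
        μv n w = ∑' v : V (n + 1), Fmat src rng n v w * μv (n + 1) v) →
      (∀ (n : ℕ) (v : V n), μv n v ≠ ⊤) →
      ∃! μ : Measure (PathSp src rng), TailInv src rng μ ∧
        ∀ (n : ℕ) (x : PathSp src rng),
          μ (cylSet src rng x n) = μv (n + 1) (rng n (x.1 n))) := by
  constructor
  · intro μ _ _ μv hcyl h0 n w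
    exact Brat.forward_dir src rng hfin hr hs μ μv hcyl h0 n w
  · intro μv hrec htop
    by_cases hne : ∀ i, Nonempty (E i)
    · exact Brat.exists_unique_tailInv src rng (fun i => (hne i).some) hs μv hfin hrec htop
    · push_neg at hne
      obtain ⟨i, hi⟩ := hne
      haveI : IsEmpty (PathSp src rng) := ⟨fun y => hi.false (y.1 i)⟩
      refine ⟨0, ⟨fun n x => (IsEmpty.false x).elim, fun n x => (IsEmpty.false x).elim⟩, ?_⟩
      intro μ' _
      ext s hs'
      rw [Set.eq_empty_of_isEmpty s]
      simp
end

section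
/- Let B be a stationary generalized Bratteli diagram whose transposed incidence matrix A = Fᵀ is irreducible, aperiodic and recurrent with Perron–Frobenius eigenvalue λ and strictly positive right eigenvector t = (t_v) satisfying At = λt. Then the assignment μ([ē(w,v)]) = t_v / λⁿ⁻¹ for any finite path ē from w ∈ V₀ to v ∈ Vₙ satisfies the Kolmogorov consistency condition and defines a tail invariant (σ-finite) measure on the path-space. The measure μ is finite if and only if ∑_v t_v < ∞. -/
open scoped ENNReal
open MeasureTheory

/-- Path-space of a stationary generalized Bratteli diagram: all levels are copies of the
vertex set `V` and the edge set `E` with source map `s` and range map `r`. -/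
abbrev StPath {V E : Type*} (s r : E → V) : Type _ :=
  {x : ℕ → E // ∀ n, r (x n) = s (x (n + 1))}

/-- The cylinder set of all infinite paths agreeing with `x` on edges `0, …, n`. -/
def cylSt {V E : Type*} (s r : E → V) (x : StPath s r) (n : ℕ) : Set (StPath s r) :=
  {y | ∀ i ≤ n, y.1 i = x.1 i}

/-- Tail invariance: cylinder sets of the same length with the same terminal vertex
have the same measure. -/
def TailInvSt {V E : Type*} [MeasurableSpace E] (s r : E → V)
    (μ : Measure (StPath s r)) : Prop :=
  ∀ (n : ℕ) (x y : StPath s r), r (x.1 n) = r (y.1 n) →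
    μ (cylSt s r x n) = μ (cylSt s r y n)

namespace StPF
open scoped Classical

variable {V E : Type*} (s r : E → V) (q : E → ℝ≥0∞) (ι : E → ℕ)

/-- partial sums of transition weights out of `v`, over edges with `ι`-index `< n`. -/
noncomputable def b (v : V) (n : ℕ) : ℝ≥0∞ :=
  ∑' e : E, if s e = v ∧ ι e < n then q e else 0

/-- full sum of transition weights out of `v`. -/
noncomputable def fullsum (v : V) : ℝ≥0∞ :=
  ∑' e : E, if s e = v then q e else 0

noncomputable def A (e : E) : ℝ := (b s q ι (s e) (ι e)).toReal

noncomputable def Q (e : E) : ℝ := (q e).toReal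

section lemmas

variable (hq1 : ∀ v, fullsum s q v = 1) (hq0 : ∀ e, q e ≠ 0) (hqT : ∀ e, q e ≠ ⊤)
  (hι : Function.Injective ι)

lemma b_le_full (v : V) (n : ℕ) : b s q ι v n ≤ fullsum s q v := by
  refine ENNReal.tsum_le_tsum fun e => ?_
  by_cases h1 : s e = v
  · by_cases h2 : ι e < n <;> simp [h1, h2]
  · simp [h1]

include hq1 in
lemma b_le_one (v : V) (n : ℕ) : b s q ι v n ≤ 1 := (b_le_full s q ι v n).trans (hq1 v).le

include hq1 in
lemma b_ne_top (v : V) (n : ℕ) : b s q ι v n ≠ ⊤ :=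
  ((b_le_one s q ι hq1 v n).trans_lt ENNReal.one_lt_top).ne

lemma b_mono (v : V) {m n : ℕ} (h : m ≤ n) : b s q ι v m ≤ b s q ι v n := by
  refine ENNReal.tsum_le_tsum fun e => ?_
  by_cases h1 : s e = v
  · by_cases h2 : ι e < m
    · simp [h1, h2, h2.trans_le h]
    · simp [h1, h2]
  · simp [h1]

lemma b_succ (v : V) (n : ℕ) :
    b s q ι v (n + 1) = b s q ι v n + ∑' e : E, if s e = v ∧ ι e = n then q e else 0 := by
  rw [b, b, ← ENNReal.tsum_add]
  refine tsum_congr fun e => ?_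
  by_cases h1 : s e = v
  · by_cases h2 : ι e < n
    · simp [h1, h2, Nat.lt_succ_of_lt h2, Nat.ne_of_lt h2]
    · by_cases h3 : ι e = n
      · simp [h1, h2, h3]
      · simp only [h1, h2, h3, and_false, and_true, true_and, if_false]
        rw [if_neg (by omega), add_zero]
  · simp [h1]

include hι in
lemma b_succ_of_eq {v : V} {n : ℕ} {e : E} (he : s e = v) (hn : ι e = n) :
    b s q ι v (n + 1) = b s q ι v n + q e := by
  rw [b_succ s q ι]
  have h := tsum_eq_single (L := SummationFilter.unconditional E) (f := fun e' : E => if s e' = v ∧ ι e' = n then q e' else 0) e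
    (fun e' he' => by
      beta_reduce
      rw [if_neg]
      rintro ⟨-, h2⟩
      exact he' (hι (h2.trans hn.symm)))
  beta_reduce at h
  rw [h, if_pos ⟨he, hn⟩]

lemma b_succ_of_not {v : V} {n : ℕ} (h : ¬ ∃ e, s e = v ∧ ι e = n) :
    b s q ι v (n + 1) = b s q ι v n := by
  rw [b_succ s q ι, ENNReal.tsum_eq_zero.mpr, add_zero]
  intro e
  rw [if_neg]
  exact fun hc => h ⟨e, hc⟩

lemma A_nonneg (e : E) : 0 ≤ A s q ι e := ENNReal.toReal_nonneg

include hq0 hqT in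
lemma Q_pos (e : E) : 0 < Q q e := ENNReal.toReal_pos (hq0 e) (hqT e)

include hqT in
lemma ofReal_Q (e : E) : ENNReal.ofReal (Q q e) = q e := by
  rw [Q]; exact ENNReal.ofReal_toReal (hqT e)

include hq1 hqT hι in
lemma A_add_Q (e : E) : A s q ι e + Q q e = (b s q ι (s e) (ι e + 1)).toReal := by
  rw [b_succ_of_eq s q ι hι rfl rfl, ENNReal.toReal_add (b_ne_top s q ι hq1 _ _) (hqT e)]
  rfl

include hq1 hqT hι in
lemma A_add_Q_le_one (e : E) : A s q ι e + Q q e ≤ 1 := by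
  rw [A_add_Q s q ι hq1 hqT hι]
  have := b_le_one s q ι hq1 (s e) (ι e + 1)
  calc (b s q ι (s e) (ι e + 1)).toReal ≤ (1 : ℝ≥0∞).toReal :=
        ENNReal.toReal_mono (by simp) this
    _ = 1 := by simp

include hq1 hqT hι in
lemma ordered {e e' : E} (hse : s e = s e') (hlt : ι e < ι e') :
    A s q ι e + Q q e ≤ A s q ι e' := by
  rw [A_add_Q s q ι hq1 hqT hι, A]
  exact ENNReal.toReal_mono (b_ne_top s q ι hq1 _ _) (hse ▸ b_mono s q ι (s e) hlt)

omit hq1 in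
include hq1 in
lemma exists_lt_b {v : V} {u : ℝ} (hu : u ∈ Set.Ico (0:ℝ) 1) :
    ∃ n, ENNReal.ofReal u < b s q ι v n := by
  by_contra hc
  push_neg at hc
  have hfull : fullsum s q v ≤ ENNReal.ofReal u := by
    rw [fullsum, ENNReal.tsum_eq_iSup_sum]
    refine iSup_le fun F => ?_
    set n := (F.sup ι) + 1 with hn
    refine le_trans (le_trans ?_ (ENNReal.sum_le_tsum F)) (hc n)
    refine le_of_eq (Finset.sum_congr rfl fun e heF => ?_)
    have : ι e < n := Nat.lt_succ_of_le (Finset.le_sup heF)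
    by_cases h1 : s e = v <;> simp [h1, this]
  rw [hq1 v] at hfull
  exact absurd (hfull.trans_lt (ENNReal.ofReal_lt_one.mpr hu.2)) (lt_irrefl _)

include hq1 hq0 hqT hι in
lemma exists_interval (v : V) {u : ℝ} (hu : u ∈ Set.Ico (0:ℝ) 1) :
    ∃ e, s e = v ∧ u ∈ Set.Ico (A s q ι e) (A s q ι e + Q q e) := by
  classical
  have hex := exists_lt_b s q ι hq1 (v := v) hu
  set n₀ := Nat.find hex with hn₀
  have hlt : ENNReal.ofReal u < b s q ι v n₀ := Nat.find_spec hex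
  have hne : n₀ ≠ 0 := by
    intro h
    rw [h] at hlt
    have : b s q ι v 0 = 0 := by
      rw [b]; exact ENNReal.tsum_eq_zero.mpr fun e => by simp
    rw [this] at hlt
    exact absurd hlt (by simp)
  obtain ⟨m, hm⟩ : ∃ m, n₀ = m + 1 := ⟨n₀ - 1, by omega⟩
  have hle : b s q ι v m ≤ ENNReal.ofReal u := by
    have := Nat.find_min hex (m := m) (by omega)
    exact not_lt.mp this
  rw [hm] at hlt
  obtain ⟨e, hev, hem⟩ : ∃ e, s e = v ∧ ι e = m := by
    by_contra hc
    rw [b_succ_of_not s q ι hc] at hlt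
    exact absurd (hlt.trans_le hle) (by simp)
  refine ⟨e, hev, ?_, ?_⟩
  · have h1 : A s q ι e = (b s q ι v m).toReal := by rw [A, hev, hem]
    rw [h1]
    calc (b s q ι v m).toReal ≤ (ENNReal.ofReal u).toReal :=
          ENNReal.toReal_mono ENNReal.ofReal_ne_top hle
      _ = u := ENNReal.toReal_ofReal hu.1
  · have h2 : A s q ι e + Q q e = (b s q ι v (m + 1)).toReal := by
      rw [A_add_Q s q ι hq1 hqT hι, hev, hem]
    rw [h2]
    calc u = (ENNReal.ofReal u).toReal := (ENNReal.toReal_ofReal hu.1).symm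
      _ < (b s q ι v (m + 1)).toReal :=
          (ENNReal.toReal_lt_toReal ENNReal.ofReal_ne_top (b_ne_top s q ι hq1 _ _)).mpr hlt

include hq1 hqT hι in
lemma interval_unique {e e' : E} {u : ℝ} (hse : s e = s e')
    (h1 : u ∈ Set.Ico (A s q ι e) (A s q ι e + Q q e))
    (h2 : u ∈ Set.Ico (A s q ι e') (A s q ι e' + Q q e')) : e = e' := by
  by_contra hne
  rcases lt_trichotomy (ι e) (ι e') with h | h | h
  · have := ordered s q ι hq1 hqT hι hse h
    linarith [h1.2, h2.1]
  · exact hne (hι h)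
  · have := ordered s q ι hq1 hqT hι hse.symm h
    linarith [h1.1, h2.2]

variable (hs : ∀ v : V, ∃ e : E, s e = v)

/-- quantile/pick function. -/
noncomputable def pick (v : V) (u : ℝ) : E :=
  if h : ∃ e, s e = v ∧ u ∈ Set.Ico (A s q ι e) (A s q ι e + Q q e) then h.choose
  else (hs v).choose

lemma s_pick (v : V) (u : ℝ) : s (pick s q ι hs v u) = v := by
  rw [pick]
  split
  · next h => exact h.choose_spec.1
  · exact (hs v).choose_spec

include hq1 hqT hι in
lemma pick_eq {v : V} {u : ℝ} {e : E} (he : s e = v)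
    (hm : u ∈ Set.Ico (A s q ι e) (A s q ι e + Q q e)) : pick s q ι hs v u = e := by
  rw [pick]
  have hex : ∃ e', s e' = v ∧ u ∈ Set.Ico (A s q ι e') (A s q ι e' + Q q e') := ⟨e, he, hm⟩
  rw [dif_pos hex]
  exact interval_unique s q ι hq1 hqT hι (hex.choose_spec.1.trans he.symm) hex.choose_spec.2 hm

include hq1 hq0 hqT hι in
lemma pick_mem {v : V} {u : ℝ} (hu : u ∈ Set.Ico (0:ℝ) 1) :
    u ∈ Set.Ico (A s q ι (pick s q ι hs v u)) (A s q ι (pick s q ι hs v u) + Q q (pick s q ι hs v u)) := by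
  obtain ⟨e, he, hm⟩ := exists_interval s q ι hq1 hq0 hqT hι v hu
  rw [pick_eq s q ι hq1 hqT hι hs he hm]
  exact hm

include hq1 hq0 hqT hι in
lemma pick_eq_iff {v : V} {u : ℝ} {e : E} (hu : u ∈ Set.Ico (0:ℝ) 1) (he : s e = v) :
    pick s q ι hs v u = e ↔ u ∈ Set.Ico (A s q ι e) (A s q ι e + Q q e) := by
  constructor
  · intro h
    have := pick_mem s q ι hq1 hq0 hqT hι hs (v := v) hu
    rwa [h] at this
  · exact pick_eq s q ι hq1 hqT hι hs he

end lemmas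

section meas

variable [Countable E] [MeasurableSpace E] [DiscreteMeasurableSpace E]
  (hq1 : ∀ v, fullsum s q v = 1) (hq0 : ∀ e, q e ≠ 0) (hqT : ∀ e, q e ≠ ⊤)
  (hι : Function.Injective ι) (hs : ∀ v : V, ∃ e : E, s e = v)

include hq1 hqT hι in
lemma measurable_pick (v : V) : Measurable (fun u => pick s q ι hs v u) := by
  refine measurable_to_countable' fun e => ?_
  have hset : (fun u => pick s q ι hs v u) ⁻¹' {e} =
      ({u : ℝ | s e = v} ∩ Set.Ico (A s q ι e) (A s q ι e + Q q e)) ∪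
      ({u : ℝ | ¬ ∃ e', s e' = v ∧ u ∈ Set.Ico (A s q ι e') (A s q ι e' + Q q e')} ∩
        {u : ℝ | (hs v).choose = e}) := by
    ext u
    simp only [Set.mem_preimage, Set.mem_singleton_iff, Set.mem_union, Set.mem_inter_iff,
      Set.mem_setOf_eq]
    rw [pick]
    split
    · next h =>
      constructor
      · rintro rfl
        exact Or.inl ⟨h.choose_spec.1, h.choose_spec.2⟩
      · rintro (⟨hev, hm⟩ | ⟨hne, _⟩)
        · exact interval_unique s q ι hq1 hqT hι (h.choose_spec.1.trans hev.symm)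
            h.choose_spec.2 hm
        · exact absurd h hne
    · next h =>
      constructor
      · rintro rfl
        exact Or.inr ⟨h, rfl⟩
      · rintro (⟨hev, hm⟩ | ⟨-, he⟩)
        · exact absurd ⟨e, hev, hm⟩ h
        · exact he
  rw [hset]
  refine MeasurableSet.union (MeasurableSet.inter ?_ measurableSet_Ico)
    (MeasurableSet.inter ?_ ?_)
  · by_cases h : s e = v
    · simp only [h, Set.setOf_true]; exact MeasurableSet.univ
    · simp only [h, Set.setOf_false]; exact MeasurableSet.empty
  · have : {u : ℝ | ¬ ∃ e', s e' = v ∧ u ∈ Set.Ico (A s q ι e') (A s q ι e' + Q q e')} =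
        (⋃ e' : E, {u : ℝ | s e' = v} ∩ Set.Ico (A s q ι e') (A s q ι e' + Q q e'))ᶜ := by
      ext u
      simp only [Set.mem_compl_iff, Set.mem_iUnion, Set.mem_inter_iff, Set.mem_setOf_eq]
    rw [this]
    refine (MeasurableSet.iUnion fun e' => MeasurableSet.inter ?_ measurableSet_Ico).compl
    by_cases h : s e' = v
    · simp only [h, Set.setOf_true]; exact MeasurableSet.univ
    · simp only [h, Set.setOf_false]; exact MeasurableSet.empty
  · by_cases h : (hs v).choose = e
    · simp only [h, Set.setOf_true]; exact MeasurableSet.univ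
    · simp only [h, Set.setOf_false]; exact MeasurableSet.empty

/-- one step of the chain: pick the next edge and renormalize the uniform variable. -/
noncomputable def step (p : E × ℝ) : E × ℝ :=
  ((pick s q ι hs (r p.1) p.2),
    (p.2 - A s q ι (pick s q ι hs (r p.1) p.2)) / Q q (pick s q ι hs (r p.1) p.2))

lemma s_step (p : E × ℝ) : s (step s r q ι hs p).1 = r p.1 := s_pick s q ι hs _ _

include hq1 hqT hι in
lemma measurable_step : Measurable (step s r q ι hs) := by
  have hg : Measurable (fun p : E × ℝ => pick s q ι hs (r p.1) p.2) := by
    have := measurable_from_prod_countable_left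
      (f := fun p : ℝ × E => pick s q ι hs (r p.2) p.1)
      (fun e => measurable_pick s q ι hq1 hqT hι hs (r e))
    exact this.comp measurable_swap
  have hh : Measurable (fun p : ℝ × E => (p.1 - A s q ι p.2) / Q q p.2) :=
    measurable_from_prod_countable_left
      (fun e => (measurable_id.sub_const (A s q ι e)).div_const (Q q e))
  exact hg.prodMk (hh.comp ((measurable_snd.prodMk hg)))

include hq1 hqT hι in
lemma measurable_iter (e₀ : E) (n : ℕ) :
    Measurable (fun u : ℝ => (step s r q ι hs)^[n] (e₀, u)) := by
  induction n with
  | zero => exact measurable_const.prodMk measurable_id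
  | succ n ih =>
    have : (fun u : ℝ => (step s r q ι hs)^[n+1] (e₀, u)) =
        (step s r q ι hs) ∘ (fun u : ℝ => (step s r q ι hs)^[n] (e₀, u)) := by
      funext u
      exact Function.iterate_succ_apply' _ _ _
    rw [this]
    exact (measurable_step s r q ι hq1 hqT hι hs).comp ih

/-- the path attached to a uniform random number. -/
noncomputable def phi (e₀ : E) (u : ℝ) : StPath s r :=
  ⟨fun n => ((step s r q ι hs)^[n] (e₀, u)).1, by
    intro n
    simp only []
    rw [Function.iterate_succ_apply']
    exact (s_step s r q ι hs _).symm⟩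

include hq1 hqT hι in
lemma measurable_phi (e₀ : E) : Measurable (phi s r q ι hs e₀) := by
  refine Measurable.subtype_mk ?_
  refine measurable_pi_lambda _ fun n => ?_
  exact measurable_fst.comp (measurable_iter s r q ι hq1 hqT hι hs e₀ n)

/-- preimage of the cylinder set. -/
def Sset (x : StPath s r) (n : ℕ) (e₀ : E) : Set ℝ :=
  {u : ℝ | u ∈ Set.Ico (0:ℝ) 1 ∧ ∀ i ≤ n, ((step s r q ι hs)^[i] (e₀, u)).1 = x.1 i}

include hq1 hqT hι in
lemma measurable_Sset (x : StPath s r) (n : ℕ) (e₀ : E) :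
    MeasurableSet (Sset s r q ι hs x n e₀) := by
  have : Sset s r q ι hs x n e₀ = Set.Ico (0:ℝ) 1 ∩
      ⋂ i, ⋂ (_ : i ≤ n), (fun u : ℝ => ((step s r q ι hs)^[i] (e₀, u)).1) ⁻¹' {x.1 i} := by
    ext u
    simp [Sset]
  rw [this]
  refine measurableSet_Ico.inter (MeasurableSet.iInter fun i => MeasurableSet.iInter fun _ => ?_)
  exact (measurable_fst.comp (measurable_iter s r q ι hq1 hqT hι hs e₀ i))
    (MeasurableSet.singleton _)

/-- shift a path by one step. -/
def shift (x : StPath s r) : StPath s r := ⟨fun n => x.1 (n + 1), fun n => x.2 (n + 1)⟩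

include hq1 hq0 hqT hι in
lemma vol_Sset : ∀ (n : ℕ) (x : StPath s r) (e₀ : E),
    volume (Sset s r q ι hs x n e₀) =
      (if x.1 0 = e₀ then 1 else 0) * ∏ i ∈ Finset.range n, q (x.1 (i + 1)) := by
  intro n
  induction n with
  | zero =>
    intro x e₀
    by_cases h : x.1 0 = e₀
    · have hset : Sset s r q ι hs x 0 e₀ = Set.Ico (0:ℝ) 1 := by
        ext u
        simp only [Sset, Set.mem_setOf_eq, Nat.le_zero, forall_eq, Function.iterate_zero, id_eq]
        exact ⟨fun h' => h'.1, fun h' => ⟨h', h.symm⟩⟩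
      rw [hset, Real.volume_Ico]
      simp [h]
    · have hset : Sset s r q ι hs x 0 e₀ = ∅ := by
        ext u
        simp only [Sset, Set.mem_setOf_eq, Nat.le_zero, forall_eq, Function.iterate_zero, id_eq,
          Set.mem_empty_iff_false, iff_false, not_and]
        exact fun _ h' => h h'.symm
      rw [hset]
      simp [h]
  | succ n ih =>
    intro x e₀
    by_cases h0 : x.1 0 = e₀
    · have hs1 : s (x.1 1) = r e₀ := by rw [← h0]; exact (x.2 0).symm
      have hQpos : 0 < Q q (x.1 1) := Q_pos q hq0 hqT _
      have hset : Sset s r q ι hs x (n + 1) e₀ =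
          (fun u : ℝ => (u - A s q ι (x.1 1)) / Q q (x.1 1)) ⁻¹'
            (Sset s r q ι hs (shift s r x) n (x.1 1)) := by
        ext u
        simp only [Sset, Set.mem_setOf_eq, Set.mem_preimage]
        constructor
        · rintro ⟨hu, hcond⟩
          have h1 : pick s q ι hs (r e₀) u = x.1 1 := hcond 1 (by omega)
          have hm : u ∈ Set.Ico (A s q ι (x.1 1)) (A s q ι (x.1 1) + Q q (x.1 1)) := by
            have := pick_mem s q ι hq1 hq0 hqT hι hs (v := r e₀) hu
            rwa [h1] at this
          have hstep : step s r q ι hs (e₀, u) =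
              (x.1 1, (u - A s q ι (x.1 1)) / Q q (x.1 1)) := by
            simp only [step, h1]
          refine ⟨⟨div_nonneg (sub_nonneg.mpr hm.1) hQpos.le,
            (div_lt_one hQpos).mpr (by linarith [hm.2])⟩, ?_⟩
          intro i hi
          have := hcond (i + 1) (by omega)
          rwa [Function.iterate_succ_apply, hstep] at this
        · rintro ⟨hφu, hcond⟩
          have hm : u ∈ Set.Ico (A s q ι (x.1 1)) (A s q ι (x.1 1) + Q q (x.1 1)) := by
            constructor
            · have h2 := mul_nonneg hφu.1 hQpos.le
              rw [div_mul_cancel₀ _ hQpos.ne'] at h2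
              linarith
            · have := (div_lt_one hQpos).mp hφu.2
              linarith
          have hu : u ∈ Set.Ico (0:ℝ) 1 :=
            ⟨(A_nonneg s q ι _).trans hm.1,
              lt_of_lt_of_le hm.2 (A_add_Q_le_one s q ι hq1 hqT hι _)⟩
          have h1 : pick s q ι hs (r e₀) u = x.1 1 :=
            pick_eq s q ι hq1 hqT hι hs hs1 hm
          have hstep : step s r q ι hs (e₀, u) =
              (x.1 1, (u - A s q ι (x.1 1)) / Q q (x.1 1)) := by
            simp only [step, h1]
          refine ⟨hu, ?_⟩
          intro i hi
          match i with
          | 0 => exact h0.symm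
          | (j + 1) =>
            rw [Function.iterate_succ_apply, hstep]
            exact hcond j (by omega)
      rw [hset]
      have hpre : (fun u : ℝ => (u - A s q ι (x.1 1)) / Q q (x.1 1)) ⁻¹'
            (Sset s r q ι hs (shift s r x) n (x.1 1))
          = (fun u : ℝ => u + (-(A s q ι (x.1 1)))) ⁻¹'
            ((fun u : ℝ => u * (Q q (x.1 1))⁻¹) ⁻¹'
              (Sset s r q ι hs (shift s r x) n (x.1 1))) := by
        ext u
        simp [div_eq_mul_inv, sub_eq_add_neg]
      rw [hpre, measure_preimage_add_right,
        Real.volume_preimage_mul_right (inv_ne_zero hQpos.ne'), inv_inv, abs_of_pos hQpos,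
        ih (shift s r x) (x.1 1)]
      have hsx0 : (shift s r x).1 0 = x.1 1 := rfl
      rw [hsx0]
      rw [if_pos rfl]
      rw [if_pos h0]
      rw [one_mul, one_mul]
      rw [ofReal_Q q hqT (x.1 1)]
      rw [Finset.prod_range_succ' (fun i => q (x.1 (i + 1))) n]
      have hpr : ∀ i, (shift s r x).1 (i + 1) = x.1 (i + 2) := fun i => rfl
      simp only [hpr]
      exact mul_comm _ _
    · have hset : Sset s r q ι hs x (n + 1) e₀ = ∅ := by
        ext u
        simp only [Sset, Set.mem_setOf_eq, Set.mem_empty_iff_false, iff_false, not_and]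
        intro _ h'
        exact h0 ((h' 0 (by omega)).symm)
      rw [hset]
      simp [h0]

end meas

end StPF

/-- On a stationary generalized Bratteli diagram whose transposed incidence
matrix has a Perron–Frobenius eigenvalue `lam` with strictly positive right eigenvector `t`
(expressed edgewise: `∑_{e : s e = w} t (r e) = lam * t w`), the assignment
`μ([ē(w,v)]) = t v / lam ^ (n-1)` (for our cylinders of `n+1` edges ending at level `n+1`,
the value `t (r (x n)) / lam ^ n`) satisfies the Kolmogorov consistency condition and
defines a tail invariant measure on the path-space; the measure is finite
iff `∑ v, t v < ∞`. -/


theorem stationary_PF_tail_invariant_measure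
    {V E : Type*} [Countable V] [Countable E]
    [MeasurableSpace E] [DiscreteMeasurableSpace E]
    (s r : E → V)
    (hfin : ∀ v : V, Finite {e : E // r e = v})
    (hr : ∀ v : V, ∃ e : E, r e = v) (hs : ∀ v : V, ∃ e : E, s e = v)
    (lam : ℝ≥0∞) (hlam0 : 0 < lam) (hlamT : lam ≠ ⊤)
    (t : V → ℝ≥0∞) (ht0 : ∀ v, 0 < t v) (htT : ∀ v, t v ≠ ⊤)
    (heig : ∀ w : V, ∑' e : {e : E // s e = w}, t (r e.1) = lam * t w) :
    (∀ (x : StPath s r) (n : ℕ),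
      t (r (x.1 n)) / lam ^ n
        = ∑' e : {e : E // s e = r (x.1 n)}, t (r e.1) / lam ^ (n + 1)) ∧
    ∃ μ : Measure (StPath s r), TailInvSt s r μ ∧
      (∀ (x : StPath s r) (n : ℕ), μ (cylSt s r x n) = t (r (x.1 n)) / lam ^ n) ∧
      (IsFiniteMeasure μ ↔ (∑' v : V, t v) ≠ ⊤) := by
  classical
  obtain ⟨ι, hι⟩ := exists_injective_nat E
  -- the transition weights
  set q : E → ℝ≥0∞ := fun e => t (r e) / (lam * t (s e)) with hqdef
  have hden0 : ∀ v : V, lam * t v ≠ 0 := fun v => mul_ne_zero hlam0.ne' (ht0 v).ne'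
  have hdenT : ∀ v : V, lam * t v ≠ ⊤ := fun v => ENNReal.mul_ne_top hlamT (htT v)
  have hq0 : ∀ e, q e ≠ 0 := by
    intro e
    rw [hqdef]
    simp only [ne_eq, ENNReal.div_eq_zero_iff, not_or]
    exact ⟨(ht0 _).ne', hdenT _⟩
  have hqT : ∀ e, q e ≠ ⊤ := by
    intro e
    rw [hqdef]
    simp only [ne_eq, ENNReal.div_eq_top, not_or, not_and]
    exact ⟨fun _ => hden0 _, fun h => absurd h (htT _)⟩
  -- the eigenvector equation in terms of `q`
  have hsubsum : ∀ v : V, (∑' e : {e : E // s e = v}, q e.1) = 1 := by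
    intro v
    have h1 : ∀ e : {e : E // s e = v}, q e.1 = t (r e.1) / (lam * t v) := by
      intro e
      rw [hqdef]
      simp only []
      rw [e.2]
    rw [tsum_congr h1]
    calc (∑' e : {e : E // s e = v}, t (r e.1) / (lam * t v))
        = ∑' e : {e : E // s e = v}, t (r e.1) * (lam * t v)⁻¹ :=
          tsum_congr fun e => div_eq_mul_inv _ _
      _ = (∑' e : {e : E // s e = v}, t (r e.1)) * (lam * t v)⁻¹ := ENNReal.tsum_mul_right
      _ = (lam * t v) * (lam * t v)⁻¹ := by rw [heig v]
      _ = 1 := ENNReal.mul_inv_cancel (hden0 v) (hdenT v)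
  have hq1 : ∀ v, StPF.fullsum s q v = 1 := by
    intro v
    rw [StPF.fullsum]
    calc (∑' e : E, if s e = v then q e else 0)
        = ∑' e : E, Set.indicator {e : E | s e = v} q e :=
          tsum_congr fun e => by by_cases h : s e = v <;> simp [Set.indicator_apply, h]
      _ = ∑' e : {e : E // s e = v}, q e.1 := (tsum_subtype _ q).symm
      _ = 1 := hsubsum v
  -- cylinders are measurable
  have hcylm : ∀ (x : StPath s r) (n : ℕ), MeasurableSet (cylSt s r x n) := by
    intro x n
    have : cylSt s r x n = ⋂ i, ⋂ (_ : i ≤ n), (fun y : StPath s r => y.1 i) ⁻¹' {x.1 i} := by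
      ext y
      simp [cylSt]
    rw [this]
    exact MeasurableSet.iInter fun i => MeasurableSet.iInter fun _ =>
      ((measurable_pi_apply i).comp measurable_subtype_coe) (MeasurableSet.singleton _)
  -- the measures
  set ν : E → Measure (StPath s r) := fun e₀ =>
    Measure.map (StPF.phi s r q ι hs e₀) (volume.restrict (Set.Ico (0:ℝ) 1)) with hνdef
  set μ : Measure (StPath s r) := Measure.sum (fun e₀ : E => t (r e₀) • ν e₀) with hμdef
  have hν : ∀ (e₀ : E) (x : StPath s r) (n : ℕ), ν e₀ (cylSt s r x n) =
      (if x.1 0 = e₀ then 1 else 0) * ∏ i ∈ Finset.range n, q (x.1 (i + 1)) := by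
    intro e₀ x n
    rw [hνdef]
    simp only []
    rw [Measure.map_apply (StPF.measurable_phi s r q ι hq1 hqT hι hs e₀) (hcylm x n),
      Measure.restrict_apply (StPF.measurable_phi s r q ι hq1 hqT hι hs e₀ (hcylm x n))]
    have hset : StPF.phi s r q ι hs e₀ ⁻¹' cylSt s r x n ∩ Set.Ico (0:ℝ) 1 =
        StPF.Sset s r q ι hs x n e₀ := by
      ext u
      simp only [Set.mem_inter_iff, Set.mem_preimage, cylSt, Set.mem_setOf_eq, StPF.Sset,
        StPF.phi]
      exact ⟨fun h => ⟨h.2, h.1⟩, fun h => ⟨h.2, h.1⟩⟩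
    rw [hset, StPF.vol_Sset s r q ι hq1 hq0 hqT hι hs n x e₀]
  -- the telescoping product
  have htel : ∀ (x : StPath s r) (n : ℕ),
      t (r (x.1 0)) * ∏ i ∈ Finset.range n, q (x.1 (i + 1)) = t (r (x.1 n)) / lam ^ n := by
    intro x n
    induction n with
    | zero => simp
    | succ n ih =>
      rw [Finset.prod_range_succ, ← mul_assoc, ih]
      have hsx : s (x.1 (n + 1)) = r (x.1 n) := (x.2 n).symm
      rw [hqdef]
      simp only []
      rw [hsx]
      set a := t (r (x.1 n)) with ha
      set c := t (r (x.1 (n + 1))) with hc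
      have ha0 : a ≠ 0 := (ht0 _).ne'
      have haT : a ≠ ⊤ := htT _
      have hl0 : lam ≠ 0 := hlam0.ne'
      rw [div_eq_mul_inv, div_eq_mul_inv, div_eq_mul_inv,
        ENNReal.mul_inv (Or.inl hl0) (Or.inl hlamT)]
      calc a * (lam ^ n)⁻¹ * (c * (lam⁻¹ * a⁻¹))
          = c * ((lam ^ n)⁻¹ * lam⁻¹) * (a * a⁻¹) := by ring
        _ = c * ((lam ^ n)⁻¹ * lam⁻¹) := by
            rw [ENNReal.mul_inv_cancel ha0 haT, mul_one]
        _ = c * (lam ^ (n + 1))⁻¹ := by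
            rw [← ENNReal.mul_inv (Or.inl (pow_ne_zero n hl0)) (Or.inl (ENNReal.pow_ne_top hlamT)),
              ← pow_succ]
  -- the cylinder measure
  have hμc : ∀ (x : StPath s r) (n : ℕ), μ (cylSt s r x n) = t (r (x.1 n)) / lam ^ n := by
    intro x n
    rw [hμdef, Measure.sum_apply _ (hcylm x n)]
    have h1 : ∀ e₀ : E, (t (r e₀) • ν e₀) (cylSt s r x n) =
        t (r e₀) * ((if x.1 0 = e₀ then 1 else 0) * ∏ i ∈ Finset.range n, q (x.1 (i + 1))) := by
      intro e₀
      rw [Measure.smul_apply, smul_eq_mul, hν]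
    rw [tsum_congr h1, tsum_eq_single (x.1 0) (fun e₀ he₀ => by
      rw [if_neg (fun h => he₀ h.symm), zero_mul, mul_zero]), if_pos rfl, one_mul, htel]
  -- total mass
  have huniv : μ Set.univ = lam * ∑' v : V, t v := by
    rw [hμdef, Measure.sum_apply _ MeasurableSet.univ]
    have h1 : ∀ e₀ : E, (t (r e₀) • ν e₀) Set.univ = t (r e₀) := by
      intro e₀
      rw [Measure.smul_apply, smul_eq_mul, hνdef]
      simp only []
      rw [Measure.map_apply (StPF.measurable_phi s r q ι hq1 hqT hι hs e₀) MeasurableSet.univ,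
        Set.preimage_univ, Measure.restrict_apply MeasurableSet.univ, Set.univ_inter,
        Real.volume_Ico]
      norm_num
    rw [tsum_congr h1]
    calc ∑' e : E, t (r e)
        = ∑' p : (Σ v : V, {e : E // s e = v}), t (r p.2.1) :=
          ((Equiv.sigmaFiberEquiv s).tsum_eq (fun e => t (r e))).symm
      _ = ∑' v : V, ∑' e : {e : E // s e = v}, t (r e.1) := ENNReal.tsum_sigma' _
      _ = ∑' v : V, lam * t v := tsum_congr heig
      _ = lam * ∑' v : V, t v := ENNReal.tsum_mul_left
  refine ⟨?_, μ, ?_, hμc, ?_⟩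
  · -- consistency
    intro x n
    rw [eq_comm]
    calc (∑' e : {e : E // s e = r (x.1 n)}, t (r e.1) / lam ^ (n + 1))
        = (∑' e : {e : E // s e = r (x.1 n)}, t (r e.1) * (lam ^ (n + 1))⁻¹) :=
          tsum_congr fun e => div_eq_mul_inv _ _
      _ = (∑' e : {e : E // s e = r (x.1 n)}, t (r e.1)) * (lam ^ (n + 1))⁻¹ :=
          ENNReal.tsum_mul_right
      _ = (∑' e : {e : E // s e = r (x.1 n)}, t (r e.1)) / lam ^ (n + 1) :=
          (div_eq_mul_inv _ _).symm
      _ = (lam * t (r (x.1 n))) / lam ^ (n + 1) := by rw [heig]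
      _ = t (r (x.1 n)) / lam ^ n := by
          rw [pow_succ', ENNReal.mul_div_mul_left _ _ hlam0.ne' hlamT]
  · -- tail invariance
    intro n x y h
    rw [hμc, hμc, h]
  · -- finiteness
    constructor
    · intro hf
      have h1 : μ Set.univ < ⊤ := measure_lt_top μ Set.univ
      rw [huniv] at h1
      intro htop
      rw [htop, ENNReal.mul_top hlam0.ne'] at h1
      exact absurd h1 (lt_irrefl _)
    · intro hne
      refine ⟨?_⟩
      rw [huniv]
      exact ENNReal.mul_lt_top hlamT.lt_top hne.lt_top
end

section
/- Let B be a generalized Bratteli diagram with the equal column sum property, Fₙ ∈ ECS(cₙ). Then the sequence of vectors μ⁽ⁿ⁾ with constant entries μ⁽ⁿ⁾_v = (c₀ c₁ ⋯ cₙ₋₁)⁻¹ satisfies Fₙᵀ μ⁽ⁿ⁺¹⁾ = μ⁽ⁿ⁾, and hence defines a tail invariant measure on the path-space. -/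
open scoped ENNReal
open MeasureTheory

/-! ### Auxiliary material: a "Bernoulli-like" measure on a countable product of finite
cyclic groups, obtained from the Haar measure. -/

instance (m : ℕ) : IsTopologicalAddGroup (ZMod m) where
  continuous_add := continuous_of_discreteTopology
  continuous_neg := continuous_of_discreteTopology

instance (m : ℕ) : BorelSpace (ZMod m) := ⟨borel_eq_top_of_discrete.symm⟩

section HaarCyl
variable (k : ℕ → ℕ) [∀ n, NeZero (k n)]

/-- The Haar probability measure on the compact group `∀ n, ZMod (k n)`. -/
noncomputable def haarG : Measure (∀ n : ℕ, ZMod (k n)) :=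
  Measure.addHaarMeasure ⟨⟨Set.univ, isCompact_univ⟩, by simp⟩

instance : (haarG k).IsAddLeftInvariant := by
  unfold haarG; infer_instance

lemma haarG_univ : haarG k Set.univ = 1 := Measure.addHaarMeasure_self

omit [∀ (n : ℕ), NeZero (k n)] in
lemma measurableSet_cylG (n : ℕ) (b : ∀ i, ZMod (k i)) :
    MeasurableSet {a : ∀ i : ℕ, ZMod (k i) | ∀ i < n, a i = b i} := by
  have h : {a : ∀ i : ℕ, ZMod (k i) | ∀ i < n, a i = b i}
      = ⋂ i ∈ Set.Iio n, (fun a : ∀ i : ℕ, ZMod (k i) => a i) ⁻¹' {b i} := by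
    ext a; simp [Set.mem_iInter]
  rw [h]
  exact MeasurableSet.biInter (Set.to_countable _)
    fun i _ => (measurable_pi_apply i) (measurableSet_singleton _)

/-- The Haar measure of a cylinder determined by the first `n` coordinates. -/
lemma haarG_cyl (n : ℕ) (b : ∀ i, ZMod (k i)) :
    haarG k {a | ∀ i < n, a i = b i} = (∏ i ∈ Finset.range n, (k i : ℝ≥0∞))⁻¹ := by
  classical
  set D : (∀ i : Fin n, ZMod (k i)) → Set (∀ i : ℕ, ZMod (k i)) :=
    fun t => {a | ∀ i : Fin n, a i.val = t i} with hD
  have hDmeas : ∀ t, MeasurableSet (D t) := by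
    intro t
    have h : D t = {a : ∀ i : ℕ, ZMod (k i) |
        ∀ i < n, a i = (if h : i < n then t ⟨i, h⟩ else 0)} := by
      ext a
      constructor
      · intro ha i hi; simpa [hi] using ha ⟨i, hi⟩
      · intro ha i; simpa [i.isLt] using ha i.val i.isLt
    rw [h]; exact measurableSet_cylG k n _
  have hDeq : ∀ t t', haarG k (D t) = haarG k (D t') := by
    intro t t'
    set g : ∀ i : ℕ, ZMod (k i) := fun i => if h : i < n then t' ⟨i, h⟩ - t ⟨i, h⟩ else 0 with hg
    have hpre : (fun a => g + a) ⁻¹' (D t') = D t := by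
      ext a
      simp only [Set.mem_preimage, Pi.add_apply, Set.mem_setOf_eq, hD, hg]
      constructor
      · intro h i
        have h1 := h i
        rw [dif_pos i.isLt] at h1
        have h2 : (t' i - t i + a i.val) - (t' i - t i) = t' i - (t' i - t i) := by rw [h1]
        rwa [add_sub_cancel_left, sub_sub_cancel] at h2
      · intro h i
        rw [dif_pos i.isLt, h i, sub_add_cancel]
    rw [← hpre, measure_preimage_add]
  have hcover : (⋃ t, D t) = Set.univ := by
    ext a
    simp only [Set.mem_iUnion, Set.mem_univ, iff_true]
    exact ⟨fun i => a i.val, fun i => rfl⟩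
  have hdisj : Pairwise (Function.onFun Disjoint D) := by
    intro t t' htt'
    rw [Function.onFun, Set.disjoint_left]
    intro a ha ha'
    exact htt' (funext fun i => (ha i).symm.trans (ha' i))
  have hsum : ∑' t, haarG k (D t) = 1 := by
    rw [← measure_iUnion hdisj hDmeas, hcover, haarG_univ]
  set t₀ : ∀ i : Fin n, ZMod (k i) := fun i => b i.val with ht₀
  have hcard : (Fintype.card (∀ i : Fin n, ZMod (k i)) : ℝ≥0∞)
      = ∏ i ∈ Finset.range n, (k i : ℝ≥0∞) := by
    rw [Fintype.card_pi]
    push_cast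
    rw [← Fin.prod_univ_eq_prod_range (fun i => (k i : ℝ≥0∞)) n]
    congr 1
    ext i
    rw [ZMod.card]
  have hsum2 : (∏ i ∈ Finset.range n, (k i : ℝ≥0∞)) * haarG k (D t₀) = 1 := by
    rw [tsum_fintype] at hsum
    rw [Finset.sum_congr rfl (fun t _ => hDeq t t₀)] at hsum
    rw [Finset.sum_const, Finset.card_univ, nsmul_eq_mul] at hsum
    rw [← hcard]
    exact hsum
  have hN0 : (∏ i ∈ Finset.range n, (k i : ℝ≥0∞)) ≠ 0 := by
    rw [Finset.prod_ne_zero_iff]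
    exact fun i _ => Nat.cast_ne_zero.mpr (NeZero.ne (k i))
  have hNT : (∏ i ∈ Finset.range n, (k i : ℝ≥0∞)) ≠ ⊤ :=
    ENNReal.prod_ne_top fun i _ => ENNReal.natCast_ne_top _
  have hval : haarG k (D t₀) = (∏ i ∈ Finset.range n, (k i : ℝ≥0∞))⁻¹ := by
    calc haarG k (D t₀) = (∏ i ∈ Finset.range n, (k i : ℝ≥0∞))⁻¹
          * ((∏ i ∈ Finset.range n, (k i : ℝ≥0∞)) * haarG k (D t₀)) := by
            rw [← mul_assoc, ENNReal.inv_mul_cancel hN0 hNT, one_mul]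
      _ = _ := by rw [hsum2, mul_one]
  have hset : {a : ∀ i : ℕ, ZMod (k i) | ∀ i < n, a i = b i} = D t₀ := by
    ext a
    constructor
    · intro h i; exact h i.val i.isLt
    · intro h i hi; exact h ⟨i, hi⟩
  rw [hset, hval]

end HaarCyl

/-! ### Auxiliary material: encoding paths by an initial edge and a digit sequence. -/

section PathEnc
variable {V E : ℕ → Type*} (src : ∀ n, E n → V n) (rng : ∀ n, E n → V (n + 1))
  (kk : ℕ → ℕ) [∀ n, NeZero (kk n)]
  (outE : ∀ n (w : V n), {e : E n // src n e = w} ≃ Fin (kk n))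

/-- Follow the edges determined by initial edge `e₀` and the digit sequence `a`. -/
def pathFun (e₀ : E 0) (a : ∀ n, ZMod (kk (n + 1))) : ∀ n, E n
  | 0 => e₀
  | (n + 1) =>
      ((outE (n + 1) (rng n (pathFun e₀ a n))).symm ⟨(a n).val, (a n).val_lt⟩).val

lemma pathFun_prop (e₀ : E 0) (a : ∀ n, ZMod (kk (n + 1))) (n : ℕ) :
    rng n (pathFun src rng kk outE e₀ a n)
      = src (n + 1) (pathFun src rng kk outE e₀ a (n + 1)) :=
  (((outE (n + 1) (rng n (pathFun src rng kk outE e₀ a n))).symm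
    ⟨(a n).val, (a n).val_lt⟩).prop).symm

/-- The encoding map into the path space. -/
def pathMap (p : E 0 × ∀ n, ZMod (kk (n + 1))) : PathSp src rng :=
  ⟨pathFun src rng kk outE p.1 p.2, pathFun_prop src rng kk outE p.1 p.2⟩

/-- The digit sequence of a path. -/
def bseq (x : PathSp src rng) (i : ℕ) : ZMod (kk (i + 1)) :=
  (((outE (i + 1) (src (i + 1) (x.1 (i + 1)))) ⟨x.1 (i + 1), rfl⟩ : Fin (kk (i + 1))).val
    : ZMod (kk (i + 1)))

omit [∀ (n : ℕ), NeZero (kk n)] in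
lemma outE_congr {n : ℕ} {w w' : V n} (h : w = w') (e : E n) (he : src n e = w) :
    outE n w ⟨e, he⟩ = outE n w' ⟨e, h ▸ he⟩ := by subst h; rfl

lemma zmod_fin_eq_iff {m : ℕ} [NeZero m] (z : ZMod m) (j : Fin m) :
    (⟨z.val, z.val_lt⟩ : Fin m) = j ↔ z = ((j.val : ℕ) : ZMod m) := by
  constructor
  · intro h
    have hv : z.val = j.val := congrArg Fin.val h
    rw [← hv]
    exact (ZMod.natCast_rightInverse z).symm
  · intro h
    apply Fin.ext
    show z.val = j.val
    rw [h, ZMod.val_natCast_of_lt j.isLt]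

lemma pathFun_step_iff (e₀ : E 0) (a : ∀ n, ZMod (kk (n + 1))) (x : PathSp src rng) (n : ℕ)
    (hn : pathFun src rng kk outE e₀ a n = x.1 n) :
    (pathFun src rng kk outE e₀ a (n + 1) = x.1 (n + 1)
      ↔ a n = bseq src rng kk outE x n) := by
  have hw : rng n (pathFun src rng kk outE e₀ a n) = src (n + 1) (x.1 (n + 1)) := by
    rw [hn]; exact x.2 n
  have he : src (n + 1) (x.1 (n + 1)) = rng n (pathFun src rng kk outE e₀ a n) := hw.symm
  have key : ∀ j : Fin (kk (n + 1)),
      (((outE (n + 1) (rng n (pathFun src rng kk outE e₀ a n))).symm j).val = x.1 (n + 1)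
        ↔ j = outE (n + 1) (rng n (pathFun src rng kk outE e₀ a n)) ⟨x.1 (n + 1), he⟩) := by
    intro j
    constructor
    · intro hval
      exact (Equiv.symm_apply_eq _).mp (Subtype.ext hval)
    · intro hj
      rw [hj, Equiv.symm_apply_apply]
  calc pathFun src rng kk outE e₀ a (n + 1) = x.1 (n + 1)
      ↔ (⟨(a n).val, (a n).val_lt⟩ : Fin (kk (n + 1)))
          = outE (n + 1) (rng n (pathFun src rng kk outE e₀ a n)) ⟨x.1 (n + 1), he⟩ :=
        key _
    _ ↔ a n = bseq src rng kk outE x n := by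
        rw [outE_congr src kk outE (n := n + 1) hw (x.1 (n + 1)) he]
        exact (zmod_fin_eq_iff _ _).trans Iff.rfl

lemma pathFun_prefix_iff (e₀ : E 0) (a : ∀ n, ZMod (kk (n + 1))) (x : PathSp src rng) (n : ℕ) :
    (∀ i ≤ n, pathFun src rng kk outE e₀ a i = x.1 i)
      ↔ (e₀ = x.1 0 ∧ ∀ i < n, a i = bseq src rng kk outE x i) := by
  induction n with
  | zero =>
    constructor
    · intro h
      exact ⟨h 0 le_rfl, fun i hi => absurd hi (Nat.not_lt_zero i)⟩
    · rintro ⟨h0, -⟩ i hi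
      rw [Nat.le_zero.mp hi]
      exact h0
  | succ n ih =>
    constructor
    · intro h
      have hpre : ∀ i ≤ n, pathFun src rng kk outE e₀ a i = x.1 i :=
        fun i hi => h i (hi.trans (Nat.le_succ n))
      obtain ⟨h0, hlt⟩ := ih.mp hpre
      refine ⟨h0, fun i hi => ?_⟩
      rcases Nat.lt_succ_iff_lt_or_eq.mp hi with hi' | rfl
      · exact hlt i hi'
      · exact (pathFun_step_iff src rng kk outE e₀ a x i (hpre i le_rfl)).mp
          (h (i + 1) le_rfl)
    · rintro ⟨h0, hlt⟩ i hi
      have hpre : ∀ j ≤ n, pathFun src rng kk outE e₀ a j = x.1 j :=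
        ih.mpr ⟨h0, fun j hj => hlt j (hj.trans (Nat.lt_succ_self n))⟩
      rcases Nat.le_succ_iff.mp hi with hi' | rfl
      · exact hpre i hi'
      · exact (pathFun_step_iff src rng kk outE e₀ a x n (hpre n le_rfl)).mpr
          (hlt n (Nat.lt_succ_self n))

lemma pathMap_preimage_cyl (x : PathSp src rng) (n : ℕ) :
    (pathMap src rng kk outE) ⁻¹' (cylSet src rng x n)
      = {x.1 0} ×ˢ {a | ∀ i < n, a i = bseq src rng kk outE x i} := by
  ext ⟨e₀, a⟩
  rw [Set.mem_preimage, Set.mem_prod]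
  exact (pathFun_prefix_iff src rng kk outE e₀ a x n).trans Iff.rfl

lemma measurable_pathMap [∀ n, Countable (E n)] [∀ n, MeasurableSpace (E n)]
    [∀ n, DiscreteMeasurableSpace (E n)] :
    Measurable (pathMap src rng kk outE) := by
  apply Measurable.subtype_mk
  apply measurable_pi_lambda
  intro n
  induction n with
  | zero => exact measurable_fst
  | succ n ih =>
    have h1 : Measurable (fun p : E 0 × (∀ m, ZMod (kk (m + 1))) =>
        (pathFun src rng kk outE p.1 p.2 n, p.2 n)) :=
      ih.prodMk ((measurable_pi_apply n).comp measurable_snd)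
    exact (Measurable.of_discrete
      (f := fun q : E n × ZMod (kk (n + 1)) =>
        ((outE (n + 1) (rng n q.1)).symm ⟨q.2.val, q.2.val_lt⟩).val)).comp h1

end PathEnc

lemma tsum_one_nat_card (α : Type*) [Finite α] :
    ∑' _ : α, (1 : ℝ≥0∞) = (Nat.card α : ℝ≥0∞) := by
  cases nonempty_fintype α
  rw [tsum_fintype]
  simp [Nat.card_eq_fintype_card]

/-- On a generalized Bratteli diagram with the equal column sum property
`Fₙ ∈ ECS(cₙ)`, the vectors with constant entries `μ⁽ⁿ⁾_v = (c₀ c₁ ⋯ cₙ₋₁)⁻¹` satisfy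
`Fₙᵀ μ⁽ⁿ⁺¹⁾ = μ⁽ⁿ⁾`, and hence define a tail invariant measure on the path-space
(whose cylinder sets of paths ending at level `n+1` have measure `(c₀ ⋯ cₙ)⁻¹`). -/
theorem ECS_constant_vectors_give_tail_invariant_measure
    {V E : ℕ → Type*} [∀ n, Countable (V n)] [∀ n, Countable (E n)]
    [∀ n, MeasurableSpace (E n)] [∀ n, DiscreteMeasurableSpace (E n)]
    (src : ∀ n, E n → V n) (rng : ∀ n, E n → V (n + 1))
    (hfin : ∀ (n : ℕ) (v : V (n + 1)), Finite {e : E n // rng n e = v})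
    (hrsur : ∀ (n : ℕ) (v : V (n + 1)), ∃ e : E n, rng n e = v)
    (hssur : ∀ (n : ℕ) (v : V n), ∃ e : E n, src n e = v)
    (c : ℕ → ℝ≥0∞) (hc0 : ∀ n, c n ≠ 0) (hcT : ∀ n, c n ≠ ⊤)
    (hECS : ∀ (n : ℕ) (w : V n), ∑' v : V (n + 1), Fmat src rng n v w = c n) :
    (∀ (n : ℕ) (w : V n),
      ∑' v : V (n + 1), Fmat src rng n v w * (∏ m ∈ Finset.range (n + 1), c m)⁻¹
        = (∏ m ∈ Finset.range n, c m)⁻¹) ∧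
    ∃ μ : Measure (PathSp src rng), TailInv src rng μ ∧
      ∀ (x : PathSp src rng) (n : ℕ),
        μ (cylSet src rng x n) = (∏ m ∈ Finset.range (n + 1), c m)⁻¹ := by
  constructor
  · -- the matrix identity
    intro n w
    have hP0 : (∏ m ∈ Finset.range n, c m) ≠ 0 :=
      Finset.prod_ne_zero_iff.mpr fun i _ => hc0 i
    have hPT : (∏ m ∈ Finset.range n, c m) ≠ ⊤ :=
      ENNReal.prod_ne_top fun i _ => hcT i
    rw [ENNReal.tsum_mul_right, hECS n w, Finset.prod_range_succ,
      ENNReal.mul_inv (Or.inl hP0) (Or.inl hPT)]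
    rw [mul_comm ((∏ m ∈ Finset.range n, c m)⁻¹) ((c n)⁻¹), ← mul_assoc,
      ENNReal.mul_inv_cancel (hc0 n) (hcT n), one_mul]
  · -- the measure
    by_cases hE : ∀ n, Nonempty (E n)
    · -- nondegenerate case
      have hV : ∀ n, Nonempty (V n) := fun n => ⟨src n (Classical.choice (hE n))⟩
      -- every column really sums to `c n`, and each vertex emits `c n` edges
      have hcard : ∀ (n : ℕ) (w : V n),
          (Nat.card {e : E n // src n e = w} : ℝ≥0∞) = c n := by
        intro n w
        have hkey : ∑' _ : {e : E n // src n e = w}, (1 : ℝ≥0∞) = c n := by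
          rw [← hECS n w]
          rw [← (Equiv.sigmaFiberEquiv
            (fun e : {e : E n // src n e = w} => rng n e.1)).tsum_eq (fun _ => (1 : ℝ≥0∞))]
          rw [ENNReal.tsum_sigma']
          refine tsum_congr fun v => ?_
          have hfe : {e' : {e : E n // src n e = w} // rng n e'.1 = v}
              ≃ {e : E n // src n e = w ∧ rng n e = v} :=
            Equiv.subtypeSubtypeEquivSubtypeInter (fun e => src n e = w) (fun e => rng n e = v)
          haveI : Finite {e : E n // src n e = w ∧ rng n e = v} :=
            haveI := hfin n v
            Finite.of_injective (fun e => (⟨e.1, e.2.2⟩ : {e : E n // rng n e = v}))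
              (fun e e' h => Subtype.ext (Subtype.mk_eq_mk.mp h))
          haveI : Finite {e' : {e : E n // src n e = w} // rng n e'.1 = v} :=
            Finite.of_equiv _ hfe.symm
          rw [tsum_one_nat_card]
          unfold Fmat
          exact congrArg (Nat.cast : ℕ → ℝ≥0∞) (Nat.card_congr hfe)
        haveI : Finite {e : E n // src n e = w} := by
          by_contra hfin'
          rw [not_finite_iff_infinite] at hfin'
          rw [ENNReal.tsum_const_eq_top_of_ne_zero one_ne_zero] at hkey
          exact hcT n hkey.symm
        rw [← hkey, tsum_one_nat_card]
      set kk : ℕ → ℕ :=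
        fun n => Nat.card {e : E n // src n e = Classical.choice (hV n)} with hkk
      have hk : ∀ n, (kk n : ℝ≥0∞) = c n := fun n => hcard n _
      have hcardkk : ∀ (n : ℕ) (w : V n), Nat.card {e : E n // src n e = w} = kk n := by
        intro n w
        have h := (hcard n w).trans (hk n).symm
        exact_mod_cast h
      have hk0 : ∀ n, kk n ≠ 0 := fun n h => hc0 n (by rw [← hk n, h, Nat.cast_zero])
      haveI : ∀ n, NeZero (kk n) := fun n => ⟨hk0 n⟩
      have hfinout : ∀ (n : ℕ) (w : V n), Finite {e : E n // src n e = w} :=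
        fun n w => Nat.finite_of_card_ne_zero (by rw [hcardkk n w]; exact hk0 n)
      set outE : ∀ n (w : V n), {e : E n // src n e = w} ≃ Fin (kk n) :=
        fun n w => haveI := hfinout n w; Finite.equivFinOfCardEq (hcardkk n w) with houtE
      haveI : IsFiniteMeasure (haarG (fun n => kk (n + 1))) :=
        ⟨by rw [haarG_univ]; exact ENNReal.one_lt_top⟩
      refine ⟨Measure.map (pathMap src rng kk outE)
        ((((c 0)⁻¹ • Measure.count).prod (haarG (fun n => kk (n + 1))))), ?_, ?_⟩
      all_goals
        have hcylm : ∀ (x : PathSp src rng) (n : ℕ), MeasurableSet (cylSet src rng x n) := by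
          intro x n
          have h : cylSet src rng x n
              = ⋂ i ∈ Set.Iic n, (fun y : PathSp src rng => y.1 i) ⁻¹' {x.1 i} := by
            ext y; simp [cylSet]
          rw [h]
          exact MeasurableSet.biInter (Set.to_countable _)
            fun i _ => ((measurable_pi_apply i).comp measurable_subtype_coe)
              (measurableSet_singleton _)
        have hval : ∀ (x : PathSp src rng) (n : ℕ),
            (Measure.map (pathMap src rng kk outE)
              ((((c 0)⁻¹ • Measure.count).prod (haarG (fun n => kk (n + 1))))))
                (cylSet src rng x n)
              = (∏ m ∈ Finset.range (n + 1), c m)⁻¹ := by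
          intro x n
          rw [Measure.map_apply (measurable_pathMap src rng kk outE) (hcylm x n)]
          rw [pathMap_preimage_cyl]
          rw [Measure.prod_prod]
          have hν : (((c 0)⁻¹ • Measure.count : Measure (E 0))) {x.1 0} = (c 0)⁻¹ := by
            rw [Measure.smul_apply, Measure.count_singleton, smul_eq_mul, mul_one]
          rw [hν]
          rw [haarG_cyl (fun n => kk (n + 1)) n (bseq src rng kk outE x)]
          have hprod : (∏ i ∈ Finset.range n, ((kk (i + 1) : ℝ≥0∞)))
              = ∏ i ∈ Finset.range n, c (i + 1) :=
            Finset.prod_congr rfl fun i _ => hk (i + 1)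
          rw [hprod]
          have hQ0 : (∏ i ∈ Finset.range n, c (i + 1)) ≠ 0 :=
            Finset.prod_ne_zero_iff.mpr fun i _ => hc0 (i + 1)
          have hQT : (∏ i ∈ Finset.range n, c (i + 1)) ≠ ⊤ :=
            ENNReal.prod_ne_top fun i _ => hcT (i + 1)
          rw [Finset.prod_range_succ', ENNReal.mul_inv (Or.inl hQ0) (Or.inl hQT), mul_comm]
      · exact fun n x y _ => by rw [hval x n, hval y n]
      · exact hval
    · -- degenerate case: some `E N` is empty, hence the path space is empty
      push_neg at hE
      obtain ⟨N, hN⟩ := hE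
      refine ⟨0, fun n x y _ => rfl, fun x n => (hN.false (x.1 N)).elim⟩
end
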